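/- arXiv:1211.3230 — 4 statements merged into one kernel-verified Lean document; each statement's English description precedes it below -/
import Mathlib

section
/- Any upper-half-plane solution of the Marcenko–Pastur inverse equation at a real point is bounded: let H be a probability measure supported on (0,∞) with ∫ t^{-2} dH(t) < ∞, let c > 0 and x > 0, and suppose m ∈ ℂ with Im(m) > 0 satisfies x = −1/m + c ∫ t dH(t)/(1 + t m). Then |m|² ≤ (|c−1|/x)·|m| + (√c/x)·(∫ t^{-2} dH(t))^{1/2}, and consequently |m| ≤ |c−1|/x + ( (√c/x)·(∫ t^{-2} dH(t))^{1/2} )^{1/2}. In particular, if the density is defined by π f(x) = Im(m), then f(x) is bounded by a constant depending only on x (bounded below by a > 0), c, and ∫ t^{-2} dH(t). -/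
open MeasureTheory Matrix Filter Finset Topology ProbabilityTheory
open scoped ENNReal BigOperators

noncomputable section

/-- Empirical spectral distribution function of a Hermitian matrix:
`F^A(x) = p⁻¹ #{k : λ_k ≤ x}`. -/
def esd {m : ℕ} {A : Matrix (Fin m) (Fin m) ℝ} (hA : A.IsHermitian) (x : ℝ) : ℝ :=
  ((Finset.univ.filter fun k => hA.eigenvalues k ≤ x).card : ℝ) / m

/-- Empirical spectral measure of a Hermitian matrix. -/
def specMeasure {m : ℕ} {A : Matrix (Fin m) (Fin m) ℝ} (hA : A.IsHermitian) : Measure ℝ :=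
  (m : ℝ≥0∞)⁻¹ • ∑ k : Fin m, Measure.dirac (hA.eigenvalues k)

/-- The sample covariance matrix `A_n = n⁻¹ (R X) (R X)ᵀ` (with `R = T^{1/2}` this is
`n⁻¹ T^{1/2} X Xᵀ T^{1/2}`). -/
def covMat {pp nn : ℕ} (R : Matrix (Fin pp) (Fin pp) ℝ) (X : Matrix (Fin pp) (Fin nn) ℝ) :
    Matrix (Fin pp) (Fin pp) ℝ := ((nn : ℝ)⁻¹) • ((R * X) * (R * X)ᴴ)

theorem covMat_isHermitian {pp nn : ℕ} (R : Matrix (Fin pp) (Fin pp) ℝ)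
    (X : Matrix (Fin pp) (Fin nn) ℝ) : (covMat R X).IsHermitian := by
  have h1 : ((R * X) * (R * X)ᴴ).IsHermitian := Matrix.isHermitian_mul_conjTranspose_self _
  show _ = _
  rw [covMat, Matrix.conjTranspose_smul, h1.eq]
  norm_num

/-- The sample covariance matrix `S_n = n⁻¹ X Xᵀ`. -/
def sampleCov {pp nn : ℕ} (X : Matrix (Fin pp) (Fin nn) ℝ) : Matrix (Fin pp) (Fin pp) ℝ :=
  ((nn : ℝ)⁻¹) • (X * Xᴴ)

theorem sampleCov_isHermitian {pp nn : ℕ} (X : Matrix (Fin pp) (Fin nn) ℝ) :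
    (sampleCov X).IsHermitian := by
  have h1 : (X * Xᴴ).IsHermitian := Matrix.isHermitian_mul_conjTranspose_self _
  show _ = _
  rw [sampleCov, Matrix.conjTranspose_smul, h1.eq]
  norm_num

/-- Kernel density estimator built from the eigenvalues of a Hermitian matrix:
`f_n(x) = (p h)⁻¹ ∑_i K((x - μ_i)/h)`. -/
def kde {m : ℕ} {A : Matrix (Fin m) (Fin m) ℝ} (hA : A.IsHermitian)
    (K : ℝ → ℝ) (h x : ℝ) : ℝ :=
  (∑ i, K ((x - hA.eigenvalues i) / h)) / (m * h)

/-- The companion distribution `F̲ = (1-c)·1_{[0,∞)} + c·F` as a measure. -/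
def companion (c : ℝ) (ν : Measure ℝ) : Measure ℝ :=
  ENNReal.ofReal (1 - c) • Measure.dirac 0 + ENNReal.ofReal c • ν

/-- Stieltjes transform of a measure on ℝ. -/
def stieltjesT (ν : Measure ℝ) (z : ℂ) : ℂ := ∫ x, ((x : ℂ) - z)⁻¹ ∂ν

/-- The Marcenko–Pastur fixed point map `w ↦ -(z - c ∫ t dH(t)/(1 + t w))⁻¹`. -/
def mpMap (c : ℝ) (H : Measure ℝ) (z w : ℂ) : ℂ :=
  -(z - (c : ℂ) * ∫ t, (t : ℂ) / (1 + (t : ℂ) * w) ∂H)⁻¹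

/-- Complexification of a real matrix. -/
def mc {m k : ℕ} (A : Matrix (Fin m) (Fin k) ℝ) : Matrix (Fin m) (Fin k) ℂ :=
  A.map fun x => (x : ℂ)

/-- Resolvent `(A - z I)⁻¹`. -/
def resolv {m : ℕ} (A : Matrix (Fin m) (Fin m) ℝ) (z : ℂ) : Matrix (Fin m) (Fin m) ℂ :=
  (mc A - z • 1)⁻¹

/-- `A_1(z)⁻¹ = (A - s sᵀ - z I)⁻¹`. -/
def res1 {m : ℕ} (A : Matrix (Fin m) (Fin m) ℝ) (s : Fin m → ℝ) (z : ℂ) :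
    Matrix (Fin m) (Fin m) ℂ := (mc A - mc (Matrix.vecMulVec s s) - z • 1)⁻¹

/-- `s_1 = T^{1/2} x_1` where `x_1` is the first column of `X`. -/
def s1 {pp nn : ℕ} (R : Matrix (Fin pp) (Fin pp) ℝ) (X : Matrix (Fin pp) (Fin nn) ℝ)
    (hn : 0 < nn) : Fin pp → ℝ := R.mulVec fun i => X i ⟨0, hn⟩

/-- Quadratic form `sᵀ M s` of a real vector with a complex matrix. -/
def quadForm {m : ℕ} (M : Matrix (Fin m) (Fin m) ℂ) (s : Fin m → ℝ) : ℂ :=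
  dotProduct (fun i => (s i : ℂ)) (M.mulVec fun i => (s i : ℂ))

/-- `b_1 = (1 + n⁻¹ E tr(T A_1(z)⁻¹))⁻¹`. -/
def b1 {Ω : Type*} [MeasurableSpace Ω] (P : Measure Ω) {pp nn : ℕ}
    (T R : Matrix (Fin pp) (Fin pp) ℝ) (X : Ω → Matrix (Fin pp) (Fin nn) ℝ)
    (hn : 0 < nn) (z : ℂ) : ℂ :=
  (1 + (nn : ℂ)⁻¹ *
      ∫ ω, Matrix.trace (mc T * res1 (covMat R (X ω)) (s1 R (X ω) hn) z) ∂P)⁻¹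

/-- `β_1 = (1 + s_1ᵀ A_1(z)⁻¹ s_1)⁻¹`. -/
def beta1 {Ω : Type*} {pp nn : ℕ}
    (R : Matrix (Fin pp) (Fin pp) ℝ) (X : Ω → Matrix (Fin pp) (Fin nn) ℝ)
    (hn : 0 < nn) (z : ℂ) (ω : Ω) : ℂ :=
  (1 + quadForm (res1 (covMat R (X ω)) (s1 R (X ω) hn) z) (s1 R (X ω) hn))⁻¹

/-- `ξ_1 = s_1ᵀ A_1(z)⁻¹ s_1 - n⁻¹ E tr(A_1(z)⁻¹ T)`. -/
def xi1 {Ω : Type*} [MeasurableSpace Ω] (P : Measure Ω) {pp nn : ℕ}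
    (T R : Matrix (Fin pp) (Fin pp) ℝ) (X : Ω → Matrix (Fin pp) (Fin nn) ℝ)
    (hn : 0 < nn) (z : ℂ) (ω : Ω) : ℂ :=
  quadForm (res1 (covMat R (X ω)) (s1 R (X ω) hn) z) (s1 R (X ω) hn)
    - (nn : ℂ)⁻¹ *
      ∫ ω', Matrix.trace (res1 (covMat R (X ω')) (s1 R (X ω') hn) z * mc T) ∂P

/-- `ρ_n = b_1 E(β_1 ξ_1)`. -/
def rhoN {Ω : Type*} [MeasurableSpace Ω] (P : Measure Ω) {pp nn : ℕ}
    (T R : Matrix (Fin pp) (Fin pp) ℝ) (X : Ω → Matrix (Fin pp) (Fin nn) ℝ)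
    (hn : 0 < nn) (z : ℂ) : ℂ :=
  b1 P T R X hn z * ∫ ω, beta1 R X hn z ω * xi1 P T R X hn z ω ∂P

/-- `m_n(z) = p⁻¹ tr((A_n - zI)⁻¹)`, the Stieltjes transform of the ESD of `A_n`. -/
def mnz {pp nn : ℕ} (R : Matrix (Fin pp) (Fin pp) ℝ) (Xm : Matrix (Fin pp) (Fin nn) ℝ)
    (z : ℂ) : ℂ := (pp : ℂ)⁻¹ * Matrix.trace (resolv (covMat R Xm) z)

/-- `m̲_n(z) = -(1 - c_n)/z + c_n m_n(z)` with `c_n = p/n`. -/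
def mUnder {pp nn : ℕ} (R : Matrix (Fin pp) (Fin pp) ℝ) (Xm : Matrix (Fin pp) (Fin nn) ℝ)
    (z : ℂ) : ℂ :=
  -(1 - (pp : ℂ) / (nn : ℂ)) / z + ((pp : ℂ) / (nn : ℂ)) * mnz R Xm z

/-- The Marcenko–Pastur density with ratio parameter `c`. -/
def mpDensity (c x : ℝ) : ℝ :=
  if (1 - Real.sqrt c) ^ 2 ≤ x ∧ x ≤ (1 + Real.sqrt c) ^ 2 then
    Real.sqrt (((1 + Real.sqrt c) ^ 2 - x) * (x - (1 - Real.sqrt c) ^ 2))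
      / (2 * Real.pi * c * x)
  else 0


set_option maxHeartbeats 1000000 in
/-- Lemma 1 (core bound): any upper half-plane solution of the Marcenko–Pastur inverse
equation at a real point `x > 0` is bounded, and hence so is the density `π⁻¹ Im m`. -/
theorem mp_inverse_equation_solution_bounded
    (H : Measure ℝ) [IsProbabilityMeasure H]
    (hsupp : H (Set.Iic (0 : ℝ)) = 0)
    (hint : Integrable (fun t : ℝ => t⁻¹ ^ 2) H)
    (c x : ℝ) (hc : 0 < c) (hx : 0 < x)
    (m : ℂ) (hm : 0 < m.im)
    (heq : (x : ℂ) = -m⁻¹ + (c : ℂ) * ∫ t, (t : ℂ) / (1 + (t : ℂ) * m) ∂H) :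
    ‖m‖ ^ 2 ≤ |c - 1| / x * ‖m‖ + Real.sqrt c / x * Real.sqrt (∫ t, t⁻¹ ^ 2 ∂H) ∧
    ‖m‖ ≤ |c - 1| / x + Real.sqrt (Real.sqrt c / x * Real.sqrt (∫ t, t⁻¹ ^ 2 ∂H)) ∧
    m.im / Real.pi ≤ |c - 1| / x
        + Real.sqrt (Real.sqrt c / x * Real.sqrt (∫ t, t⁻¹ ^ 2 ∂H)) := by
  have hm0 : m ≠ 0 := by
    intro h; rw [h] at hm; simp at hm
  set v := m.im with hvdef
  set r := ‖m‖ with hrdef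
  have hrpos : 0 < r := norm_pos_iff.mpr hm0
  have hnsq : Complex.normSq m = r ^ 2 := by
    rw [hrdef, Complex.sq_norm]
  have hae : ∀ᵐ t ∂H, 0 < t := by
    rw [ae_iff]
    have hset : {t : ℝ | ¬ 0 < t} = Set.Iic 0 := by ext t; simp [not_lt]
    rw [hset]; exact hsupp
  -- imaginary part of 1 + t m
  have hIm : ∀ t : ℝ, ((1 : ℂ) + t * m).im = t * v := by
    intro t; simp [Complex.add_im, Complex.mul_im]; left; rfl
  have hRe : ∀ t : ℝ, ((1 : ℂ) + t * m).re = 1 + t * m.re := by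
    intro t; simp [Complex.add_re, Complex.mul_re]
  have hne0 : ∀ t : ℝ, 0 < t → (1 : ℂ) + t * m ≠ 0 := by
    intro t ht h
    have h2 := congrArg Complex.im h
    rw [hIm t] at h2
    simp only [Complex.zero_im] at h2
    nlinarith
  have habs1 : ∀ t : ℝ, 0 < t → t * v ≤ ‖1 + (t : ℂ) * m‖ := by
    intro t ht
    have h1 := Complex.abs_im_le_norm ((1 : ℂ) + t * m)
    rw [hIm t, abs_of_pos (mul_pos ht hm)] at h1
    exact h1
  have habs2 : ∀ t : ℝ, v ≤ r * ‖1 + (t : ℂ) * m‖ := by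
    intro t
    have h1 : v ^ 2 ≤ Complex.normSq m * Complex.normSq (1 + (t : ℂ) * m) := by
      rw [Complex.normSq_apply, Complex.normSq_apply, hIm t, hRe t]
      nlinarith [sq_nonneg (m.re * (1 + t * m.re) + t * v * v)]
    have h2 : (0 : ℝ) ≤ r * ‖1 + (t : ℂ) * m‖ := by positivity
    have h3 : Complex.normSq m * Complex.normSq (1 + (t : ℂ) * m)
        = (r * ‖1 + (t : ℂ) * m‖) ^ 2 := by
      rw [← Complex.sq_norm, ← Complex.sq_norm, ← hrdef]; ring
    nlinarith [hm]
  -- measurability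
  have meas0 : Measurable (fun t : ℝ => (1 : ℂ) + t * m) :=
    measurable_const.add (Complex.measurable_ofReal.mul measurable_const)
  have hIntInv : Integrable (fun t : ℝ => ((1 : ℂ) + t * m)⁻¹) H := by
    apply Integrable.mono' (integrable_const (r / v)) meas0.inv.aestronglyMeasurable
    filter_upwards [hae] with t ht
    simp only [Pi.inv_apply]
    rw [norm_inv]
    have h2 : v / r ≤ ‖1 + (t : ℂ) * m‖ := by
      rw [div_le_iff₀ hrpos, mul_comm]; exact habs2 t
    have h3 : (0 : ℝ) < v / r := by positivity
    calc (‖1 + (t : ℂ) * m‖)⁻¹ ≤ (v / r)⁻¹ := by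
          exact inv_anti₀ h3 h2
      _ = r / v := by rw [inv_div]
  have hbnd : ∀ t : ℝ, 0 < t → ‖(t : ℂ) / (1 + (t : ℂ) * m)‖ ≤ v⁻¹ := by
    intro t ht
    rw [norm_div, Complex.norm_real, Real.norm_eq_abs, abs_of_pos ht]
    have h1 := habs1 t ht
    have h2 : (0 : ℝ) < ‖1 + (t : ℂ) * m‖ := lt_of_lt_of_le (by positivity) h1
    rw [div_le_iff₀ h2]
    calc t = v⁻¹ * (t * v) := by field_simp
      _ ≤ v⁻¹ * ‖1 + (t : ℂ) * m‖ :=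
          mul_le_mul_of_nonneg_left h1 (by positivity)
  have hIntDiv : Integrable (fun t : ℝ => (t : ℂ) / (1 + (t : ℂ) * m)) H := by
    apply Integrable.mono' (integrable_const v⁻¹)
      (Complex.measurable_ofReal.div meas0).aestronglyMeasurable
    filter_upwards [hae] with t ht
    exact hbnd t ht
  have hIntA : Integrable (fun t : ℝ => t ^ 2 / Complex.normSq (1 + (t : ℂ) * m)) H := by
    apply Integrable.mono' (integrable_const (v⁻¹ ^ 2))
      (((continuous_pow 2).measurable.div
        (Complex.continuous_normSq.measurable.comp meas0)).aestronglyMeasurable)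
    filter_upwards [hae] with t ht
    show ‖t ^ 2 / Complex.normSq (1 + (t : ℂ) * m)‖ ≤ v⁻¹ ^ 2
    have h1 : t ^ 2 / Complex.normSq (1 + (t : ℂ) * m) = ‖(t : ℂ) / (1 + (t : ℂ) * m)‖ ^ 2 := by
      have h2 : ‖(t : ℂ) / (1 + (t : ℂ) * m)‖ ^ 2 = Complex.normSq ((t : ℂ) / (1 + (t : ℂ) * m)) := by
        rw [Complex.sq_norm]
      rw [h2, Complex.normSq_div, Complex.normSq_ofReal, sq]
    rw [Real.norm_eq_abs, h1, abs_of_nonneg (by positivity)]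
    have := hbnd t ht
    nlinarith [norm_nonneg ((t : ℂ) / (1 + (t : ℂ) * m))]
  set I1 := ∫ t, (t : ℂ) / (1 + (t : ℂ) * m) ∂H with hI1
  set A := ∫ t, t ^ 2 / Complex.normSq (1 + (t : ℂ) * m) ∂H with hA
  set B := ∫ t, t⁻¹ ^ 2 ∂H with hB
  -- imaginary part identity
  have hA0 : 0 ≤ A :=
    integral_nonneg fun t => div_nonneg (sq_nonneg t) (Complex.normSq_nonneg _)
  have hAval : c * A * r ^ 2 = 1 := by
    have h0 := congrArg Complex.im heq
    rw [Complex.ofReal_im, Complex.add_im, Complex.neg_im, Complex.inv_im, hnsq,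
      Complex.mul_im] at h0
    simp only [Complex.ofReal_re, Complex.ofReal_im, zero_mul, add_zero] at h0
    have hIm1 : I1.im = -(v * A) := by
      have h2 := integral_im (𝕜 := ℂ) hIntDiv
      simp only [RCLike.im_to_complex] at h2
      rw [hI1, ← h2]
      have h1 : ∫ t, ((t : ℂ) / (1 + (t : ℂ) * m)).im ∂H
          = ∫ t, -(v * (t ^ 2 / Complex.normSq (1 + (t : ℂ) * m))) ∂H := by
        apply integral_congr_ae
        filter_upwards [] with t
        rw [Complex.div_im, hIm t, hRe t]
        simp only [Complex.ofReal_im, Complex.ofReal_re]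
        ring
      rw [h1, integral_neg, integral_const_mul]
    rw [hIm1] at h0
    have hv : v ≠ 0 := ne_of_gt hm
    have hr2 : r ^ 2 ≠ 0 := by positivity
    field_simp at h0
    -- h0 should now be linear-ish; finish
    nlinarith [h0]
  have hAeq : A = 1 / (c * r ^ 2) := by
    have hc0 : c ≠ 0 := ne_of_gt hc
    have hr0 : r ≠ 0 := ne_of_gt hrpos
    field_simp
    linear_combination hAval
  have hApos : 0 < A := by rw [hAeq]; positivity
  -- positivity of B
  have hBpos : 0 < B := by
    rw [hB, integral_pos_iff_support_of_nonneg_ae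
      (Eventually.of_forall fun t => by positivity) hint]
    have hsub : Set.Ioi (0 : ℝ) ⊆ Function.support fun t : ℝ => t⁻¹ ^ 2 := by
      intro t ht
      simp only [Function.mem_support]
      have : (0:ℝ) < t := ht
      positivity
    have h1 : H (Set.Ioi (0 : ℝ)) = 1 := by
      have h2 : Set.Ioi (0:ℝ) = (Set.Iic (0:ℝ))ᶜ := by simp
      rw [h2, measure_compl measurableSet_Iic (measure_ne_top H _), hsupp, measure_univ]
      simp
    calc (0 : ℝ≥0∞) < 1 := by norm_num
      _ = H (Set.Ioi 0) := h1.symm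
      _ ≤ _ := measure_mono hsub
  -- Cauchy-Schwarz via AM-GM
  set K := ∫ t, (‖1 + (t : ℂ) * m‖)⁻¹ ∂H with hK
  have hIntK : Integrable (fun t : ℝ => (‖1 + (t : ℂ) * m‖)⁻¹) H := by
    have h1 : (fun t : ℝ => (‖1 + (t : ℂ) * m‖)⁻¹)
        = fun t : ℝ => ‖((1 : ℂ) + t * m)⁻¹‖ := by
      funext t; rw [norm_inv]
    rw [h1]; exact hIntInv.norm
  set s := Real.sqrt B / Real.sqrt A with hs
  have hspos : 0 < s := by
    rw [hs]; exact div_pos (Real.sqrt_pos.mpr hBpos) (Real.sqrt_pos.mpr hApos)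
  have hKle : K ≤ Real.sqrt A * Real.sqrt B := by
    set u := Real.sqrt s with hu
    have hupos : 0 < u := Real.sqrt_pos.mpr hspos
    have hu2 : u ^ 2 = s := Real.sq_sqrt hspos.le
    have hle : K ≤ ∫ t, (s * (t ^ 2 / Complex.normSq (1 + (t : ℂ) * m)) + s⁻¹ * t⁻¹ ^ 2) / 2 ∂H := by
      apply integral_mono_ae hIntK (((hIntA.const_mul s).add (hint.const_mul s⁻¹)).div_const 2)
      filter_upwards [hae] with t ht
      simp only [Pi.add_apply]
      set C := ‖1 + (t : ℂ) * m‖ with hC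
      have hCpos : 0 < C := lt_of_lt_of_le (mul_pos ht hm) (habs1 t ht)
      have hCsq : Complex.normSq (1 + (t : ℂ) * m) = C ^ 2 := (Complex.sq_norm _).symm
      rw [hCsq]
      have key : (u * (t / C) - u⁻¹ * t⁻¹) ^ 2
          = s * (t ^ 2 / C ^ 2) + s⁻¹ * t⁻¹ ^ 2 - 2 * C⁻¹ := by
        rw [← hu2]
        field_simp
        ring
      nlinarith [sq_nonneg (u * (t / C) - u⁻¹ * t⁻¹)]
    have heval : ∫ t, (s * (t ^ 2 / Complex.normSq (1 + (t : ℂ) * m)) + s⁻¹ * t⁻¹ ^ 2) / 2 ∂H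
        = (s * A + s⁻¹ * B) / 2 := by
      rw [integral_div, integral_add (hIntA.const_mul s) (hint.const_mul s⁻¹),
        integral_const_mul, integral_const_mul]
    rw [heval] at hle
    have hAs : Real.sqrt A * Real.sqrt A = A := Real.mul_self_sqrt hA0
    have hBs : Real.sqrt B * Real.sqrt B = B := Real.mul_self_sqrt hBpos.le
    have hA0' : Real.sqrt A ≠ 0 := ne_of_gt (Real.sqrt_pos.mpr hApos)
    have hB0' : Real.sqrt B ≠ 0 := ne_of_gt (Real.sqrt_pos.mpr hBpos)
    have hsA : s * A = Real.sqrt A * Real.sqrt B := by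
      rw [hs]
      calc Real.sqrt B / Real.sqrt A * A = Real.sqrt B * (A / Real.sqrt A) := by ring
        _ = Real.sqrt B * Real.sqrt A := by rw [Real.div_sqrt]
        _ = Real.sqrt A * Real.sqrt B := mul_comm _ _
    have hsB : s⁻¹ * B = Real.sqrt A * Real.sqrt B := by
      rw [hs, inv_div]
      calc Real.sqrt A / Real.sqrt B * B = Real.sqrt A * (B / Real.sqrt B) := by ring
        _ = Real.sqrt A * Real.sqrt B := by rw [Real.div_sqrt]
    rw [hsA, hsB] at hle
    linarith
  -- the algebraic identity x m = (c-1) - c J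
  set J := ∫ t, ((1 : ℂ) + (t : ℂ) * m)⁻¹ ∂H with hJ
  have hxm : (x : ℂ) * m = ((c : ℂ) - 1) - c * J := by
    have h1 : (x : ℂ) * m = -1 + (c : ℂ) * (m * I1) := by
      rw [heq]
      have : (-m⁻¹ + (c : ℂ) * I1) * m = -(m⁻¹ * m) + (c : ℂ) * (m * I1) := by ring
      rw [this, inv_mul_cancel₀ hm0]
    have h2 : m * I1 = 1 - J := by
      rw [hI1, ← integral_const_mul]
      have h3 : ∫ t, m * ((t : ℂ) / (1 + (t : ℂ) * m)) ∂H
          = ∫ t, ((1 : ℂ) - ((1 : ℂ) + (t : ℂ) * m)⁻¹) ∂H := by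
        apply integral_congr_ae
        filter_upwards [hae] with t ht
        have hne := hne0 t ht
        field_simp
        have hne' : (1 : ℂ) + m * (t : ℂ) ≠ 0 := by rwa [mul_comm m]
        rw [eq_sub_iff_add_eq, ← add_div, add_comm (m * (t : ℂ)) 1, div_self hne']
      rw [h3, integral_sub (integrable_const 1) hIntInv, integral_const]
      simp [measure_univ]
      exact hJ.symm
    rw [h1, h2]; ring
  -- norm bound
  have hnorm : x * r ≤ |c - 1| + c * K := by
    have h1 : ‖(x : ℂ) * m‖ = x * r := by
      rw [norm_mul, Complex.norm_real, Real.norm_eq_abs, abs_of_pos hx]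
    have h3 : ‖J‖ ≤ K := by
      rw [hJ, hK]
      refine le_trans (norm_integral_le_integral_norm _) (le_of_eq ?_)
      apply integral_congr_ae
      filter_upwards [] with t
      rw [norm_inv]
    have h2 : ‖((c : ℂ) - 1) - c * J‖ ≤ |c - 1| + c * K := by
      calc ‖((c : ℂ) - 1) - (c : ℂ) * J‖ ≤ ‖(c : ℂ) - 1‖ + ‖(c : ℂ) * J‖ := norm_sub_le _ _
        _ = |c - 1| + c * ‖J‖ := by
            rw [norm_mul, Complex.norm_real, Real.norm_eq_abs, abs_of_pos hc]
            congr 1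
            rw [show (c : ℂ) - 1 = ((c - 1 : ℝ) : ℂ) by push_cast; ring,
              Complex.norm_real, Real.norm_eq_abs]
        _ ≤ |c - 1| + c * K := by
            have := mul_le_mul_of_nonneg_left h3 hc.le
            linarith
    rw [← h1, hxm]
    exact h2
  have hcK : c * K ≤ Real.sqrt c / r * Real.sqrt B := by
    have h4 : Real.sqrt A = (Real.sqrt c * r)⁻¹ := by
      rw [hAeq, one_div, Real.sqrt_inv, Real.sqrt_mul hc.le, Real.sqrt_sq hrpos.le]
    have h5 : c * (Real.sqrt A * Real.sqrt B) = Real.sqrt c / r * Real.sqrt B := by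
      rw [h4]
      calc c * ((Real.sqrt c * r)⁻¹ * Real.sqrt B)
          = c / Real.sqrt c * (Real.sqrt B / r) := by rw [mul_inv]; ring
        _ = Real.sqrt c * (Real.sqrt B / r) := by rw [Real.div_sqrt]
        _ = Real.sqrt c / r * Real.sqrt B := by ring
    calc c * K ≤ c * (Real.sqrt A * Real.sqrt B) := mul_le_mul_of_nonneg_left hKle hc.le
      _ = _ := h5
  have main1 : x * r ^ 2 ≤ |c - 1| * r + Real.sqrt c * Real.sqrt B := by
    have h6 : x * r ≤ |c - 1| + Real.sqrt c / r * Real.sqrt B := by linarith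
    have h7 := mul_le_mul_of_nonneg_right h6 hrpos.le
    have hr0 : r ≠ 0 := ne_of_gt hrpos
    have h8 : Real.sqrt c / r * Real.sqrt B * r = Real.sqrt c * Real.sqrt B := by
      field_simp
    calc x * r ^ 2 = x * r * r := by ring
      _ ≤ (|c - 1| + Real.sqrt c / r * Real.sqrt B) * r := h7
      _ = |c - 1| * r + Real.sqrt c / r * Real.sqrt B * r := by ring
      _ = |c - 1| * r + Real.sqrt c * Real.sqrt B := by rw [h8]
  have goal1 : r ^ 2 ≤ |c - 1| / x * r + Real.sqrt c / x * Real.sqrt B := by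
    rw [div_mul_eq_mul_div, div_mul_eq_mul_div, ← add_div, le_div_iff₀ hx]
    nlinarith [main1]
  refine ⟨goal1, ?_, ?_⟩
  · -- goal 2
    set a' := |c - 1| / x with ha'
    set b' := Real.sqrt c / x * Real.sqrt B with hb'
    have ha0 : 0 ≤ a' := by positivity
    have hb0 : 0 ≤ b' := by positivity
    by_contra hcon
    push_neg at hcon
    have h1 : Real.sqrt b' ≤ r := by
      have := Real.sqrt_nonneg b'
      linarith
    have h2 : Real.sqrt b' ^ 2 = b' := Real.sq_sqrt hb0
    nlinarith [goal1, hcon, h1, h2, Real.sqrt_nonneg b', mul_le_mul_of_nonneg_left h1 (Real.sqrt_nonneg b')]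
  · -- goal 3
    have h1 : v / Real.pi ≤ v := div_le_self hm.le (by linarith [Real.pi_gt_three])
    have h2 : v ≤ r := by
      rw [hrdef]
      exact le_trans (Complex.im_le_norm m) le_rfl
    set a' := |c - 1| / x with ha'
    set b' := Real.sqrt c / x * Real.sqrt B with hb'
    have ha0 : 0 ≤ a' := by positivity
    have hb0 : 0 ≤ b' := by positivity
    have h3 : r ≤ a' + Real.sqrt b' := by
      by_contra hcon
      push_neg at hcon
      have h4 : Real.sqrt b' ≤ r := by
        have := Real.sqrt_nonneg b'
        linarith
      have h5 : Real.sqrt b' ^ 2 = b' := Real.sq_sqrt hb0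
      nlinarith [goal1, hcon, h4, h5, Real.sqrt_nonneg b', mul_le_mul_of_nonneg_left h4 (Real.sqrt_nonneg b')]
    linarith
end
end

section
/- Under the assumptions of Theorem 1, the densities f_{c_n,H_n} approximate f_{c,H} along converging sequences: if x_n → x with x_n, x in the support [a,b] (a > 0) of F_{c,H}, then f_{c_n,H_n}(x_n) − f_{c,H}(x_n) → 0 as n → ∞. -/
open MeasureTheory Matrix Filter Finset Topology ProbabilityTheory
open scoped ENNReal BigOperators

noncomputable section

open Metric

def Gt (μ : Measure ℝ) (w : ℂ) : ℂ := ∫ t, (t : ℂ) / (1 + (t : ℂ) * w) ∂μ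

lemma one_add_ne {w : ℂ} (hw : 0 < w.im) (t : ℝ) : (1 : ℂ) + (t : ℂ) * w ≠ 0 := by
  intro h
  have him : ((1 : ℂ) + (t : ℂ) * w).im = t * w.im := by simp
  have hre : ((1 : ℂ) + (t : ℂ) * w).re = 1 + t * w.re := by simp
  rw [h] at him hre
  simp at him hre
  rcases him with h0 | h0
  · rw [h0] at hre; simp at hre
  · exact hw.ne' h0

lemma abs_one_add_ge {w : ℂ} (hw : 0 < w.im) (t : ℝ) :
    |t| * w.im ≤ ‖1 + (t : ℂ) * w‖ := by
  have : ((1 : ℂ) + (t : ℂ) * w).im = t * w.im := by simp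
  calc |t| * w.im = |((1 : ℂ) + (t : ℂ) * w).im| := by
        rw [this, abs_mul, abs_of_pos hw]
    _ ≤ _ := Complex.abs_im_le_norm _

lemma norm_integrand_le {w : ℂ} (hw : 0 < w.im) (t : ℝ) :
    ‖(t : ℂ) / (1 + (t : ℂ) * w)‖ ≤ 1 / w.im := by
  rcases eq_or_ne t 0 with rfl | ht
  · simp; positivity
  · have h1 : (0:ℝ) < |t| * w.im := by positivity
    have h2 := abs_one_add_ge hw t
    rw [norm_div, Complex.norm_real, Real.norm_eq_abs]
    rw [div_le_div_iff₀ (lt_of_lt_of_le h1 h2) hw]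
    calc |t| * w.im ≤ ‖1 + (t:ℂ)*w‖ := h2
      _ ≤ ‖1 + (t:ℂ)*w‖ * 1 := by ring_nf; rfl
      _ = 1 * ‖1 + (t:ℂ)*w‖ := by ring

lemma integrable_bdd {E : Type*} [NormedAddCommGroup E] {f : ℝ → E} (hf : Continuous f)
    {C : ℝ} (h : ∀ t, ‖f t‖ ≤ C) (μ : Measure ℝ) [IsFiniteMeasure μ] : Integrable f μ :=
  (integrable_const C).mono' hf.aestronglyMeasurable (ae_of_all _ h)

lemma integrable_integrand {w : ℂ} (hw : 0 < w.im) (μ : Measure ℝ) [IsFiniteMeasure μ] :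
    Integrable (fun t : ℝ => (t : ℂ) / (1 + (t : ℂ) * w)) μ := by
  apply integrable_bdd ?_ (norm_integrand_le hw) μ
  exact Complex.continuous_ofReal.div
    (continuous_const.add (Complex.continuous_ofReal.mul continuous_const))
    (fun t => one_add_ne hw t)

lemma norm_Gt_le {w : ℂ} (hw : 0 < w.im) {μ : Measure ℝ} [IsFiniteMeasure μ]
    (hμ : μ Set.univ ≤ 1) : ‖Gt μ w‖ ≤ 1 / w.im := by
  have h := norm_integral_le_of_norm_le_const (μ := μ)
    (C := 1 / w.im) (ae_of_all _ (norm_integrand_le hw))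
  refine h.trans ?_
  have h1 : μ.real Set.univ ≤ 1 := by
    rw [← ENNReal.toReal_one]; exact ENNReal.toReal_mono (by norm_num) hμ
  have h2 : (0:ℝ) ≤ 1 / w.im := by positivity
  nlinarith [h2, h1, (ENNReal.toReal_nonneg (a := μ Set.univ) : 0 ≤ μ.real Set.univ)]

lemma Gt_lip {κ : ℝ} (hκ : 0 < κ) {w w' : ℂ} (hw : κ ≤ w.im) (hw' : κ ≤ w'.im)
    {μ : Measure ℝ} [IsFiniteMeasure μ] (hμ : μ Set.univ ≤ 1) :
    ‖Gt μ w - Gt μ w'‖ ≤ ‖w - w'‖ / κ ^ 2 := by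
  have hwim : 0 < w.im := lt_of_lt_of_le hκ hw
  have hwim' : 0 < w'.im := lt_of_lt_of_le hκ hw'
  have key : ∀ t : ℝ, ‖(t : ℂ) / (1 + (t : ℂ) * w) - (t : ℂ) / (1 + (t : ℂ) * w')‖
      ≤ ‖w - w'‖ / κ ^ 2 := by
    intro t
    rcases eq_or_ne t 0 with rfl | ht
    · simp; positivity
    · have hne := one_add_ne hwim t
      have hne' := one_add_ne hwim' t
      have heq : (t : ℂ) / (1 + (t : ℂ) * w) - (t : ℂ) / (1 + (t : ℂ) * w')
          = ((t:ℂ)^2 * (w' - w)) / ((1 + (t : ℂ) * w) * (1 + (t : ℂ) * w')) := by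
        field_simp; ring
      rw [heq, norm_div, norm_mul, norm_mul]
      have habs : (0:ℝ) < |t| := abs_pos.mpr ht
      have h1 : |t| * κ ≤ ‖(1 : ℂ) + (t : ℂ) * w‖ := by
        refine le_trans ?_ (abs_one_add_ge hwim t)
        nlinarith
      have h2 : |t| * κ ≤ ‖(1 : ℂ) + (t : ℂ) * w'‖ := by
        refine le_trans ?_ (abs_one_add_ge hwim' t)
        nlinarith
      have hn1 : ‖(t:ℂ)^2‖ = |t|^2 := by
        rw [norm_pow]; norm_num [Complex.norm_real]
      have hd : (0:ℝ) < |t| * κ := by positivity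
      rw [hn1]
      have hp1 : (0:ℝ) < ‖(1 : ℂ) + (t : ℂ) * w‖ := lt_of_lt_of_le hd h1
      have hp2 : (0:ℝ) < ‖(1 : ℂ) + (t : ℂ) * w'‖ := lt_of_lt_of_le hd h2
      rw [div_le_div_iff₀ (mul_pos hp1 hp2) (by positivity : (0:ℝ) < κ^2)]
      have hnn : (0:ℝ) ≤ ‖w' - w‖ := norm_nonneg _
      have hsw : ‖w' - w‖ = ‖w - w'‖ := norm_sub_rev _ _
      calc |t|^2 * ‖w' - w‖ * κ^2 = (|t| * κ) * (|t| * κ) * ‖w - w'‖ := by rw [hsw]; ring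
        _ ≤ ‖(1 : ℂ) + (t : ℂ) * w‖ * ‖(1 : ℂ) + (t : ℂ) * w'‖ * ‖w - w'‖ := by
            have := mul_le_mul h1 h2 (le_of_lt hd) (norm_nonneg _)
            nlinarith [norm_nonneg (w - w')]
        _ = ‖w - w'‖ * (‖(1 : ℂ) + (t : ℂ) * w‖ * ‖(1 : ℂ) + (t : ℂ) * w'‖) := by ring
  have hint := integrable_integrand hwim μ
  have hint' := integrable_integrand hwim' μ
  have : Gt μ w - Gt μ w' = ∫ t, ((t : ℂ) / (1 + (t : ℂ) * w) - (t : ℂ) / (1 + (t : ℂ) * w')) ∂μ := by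
    rw [Gt, Gt, integral_sub hint hint']
  rw [this]
  have h := norm_integral_le_of_norm_le_const (μ := μ) (C := ‖w - w'‖ / κ^2) (ae_of_all _ key)
  refine h.trans ?_
  have h1 : μ.real Set.univ ≤ 1 := by
    rw [← ENNReal.toReal_one]; exact ENNReal.toReal_mono (by norm_num) hμ
  have h2 : (0:ℝ) ≤ ‖w - w'‖ / κ^2 := by positivity
  nlinarith [(ENNReal.toReal_nonneg (a := μ Set.univ) : 0 ≤ μ.real Set.univ)]

lemma sol_bound {μ : Measure ℝ} [IsFiniteMeasure μ] (hμ : μ Set.univ ≤ 1)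
    {c' x : ℝ} (hc' : 0 < c') (hx : 0 < x) {m : ℂ} (hm : 0 < m.im)
    (heq : (x : ℂ) = -m⁻¹ + (c' : ℂ) * Gt μ m) :
    ‖m‖ ≤ (1 + Real.sqrt c') / x := by
  have hm0 : m ≠ 0 := by
    intro h; rw [h] at hm; simp at hm
  have hne : ∀ t : ℝ, (1 : ℂ) + (t : ℂ) * m ≠ 0 := one_add_ne hm
  set s : ℝ → ℂ := fun t => ((1 : ℂ) + (t : ℂ) * m)⁻¹ with hs
  -- pointwise identity m * f t = 1 - s t
  have hpt : ∀ t : ℝ, m * ((t : ℂ) / (1 + (t : ℂ) * m)) = 1 - s t := by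
    intro t
    have h := hne t
    have h' : (1:ℂ) + m * t ≠ 0 := by rwa [mul_comm]
    rw [hs]
    field_simp
    ring
  -- norm of 1 - s t
  have hnorm : ∀ t : ℝ, ‖(1 : ℂ) - s t‖ = |t| * ‖m‖ / ‖1 + (t:ℂ)*m‖ := by
    intro t
    rw [← hpt t, norm_mul, norm_div]
    simp [Complex.norm_real]
    ring
  have hbdd : ∀ t : ℝ, ‖(1 : ℂ) - s t‖ ≤ ‖m‖ / m.im := by
    intro t
    rw [hnorm t]
    rcases eq_or_ne t 0 with rfl | ht
    · simp; positivity
    · have h2 := abs_one_add_ge hm t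
      have habs : (0:ℝ) < |t| := abs_pos.mpr ht
      have hp : (0:ℝ) < ‖1 + (t:ℂ)*m‖ := lt_of_lt_of_le (by positivity) h2
      rw [div_le_div_iff₀ hp hm]
      calc |t| * ‖m‖ * m.im = (|t| * m.im) * ‖m‖ := by ring
        _ ≤ ‖1 + (t:ℂ)*m‖ * ‖m‖ := by
            apply mul_le_mul_of_nonneg_right h2 (norm_nonneg m)
        _ = ‖m‖ * ‖1 + (t:ℂ)*m‖ := by ring
  have hcont : Continuous (fun t : ℝ => (1 : ℂ) - s t) := by
    apply continuous_const.sub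
    exact (continuous_const.add (Complex.continuous_ofReal.mul continuous_const)).inv₀ hne
  have hint1 : Integrable (fun t : ℝ => (1 : ℂ) - s t) μ := integrable_bdd hcont hbdd μ
  have hintf := integrable_integrand hm μ
  -- step eq2
  have eq2 : (x : ℂ) * m = -1 + (c' : ℂ) * ∫ t, ((1:ℂ) - s t) ∂μ := by
    have h1 : (x : ℂ) * m = (-m⁻¹ + (c' : ℂ) * Gt μ m) * m := by rw [← heq]
    rw [h1]
    have h2 : Gt μ m * m = ∫ t, ((1:ℂ) - s t) ∂μ := by
      rw [Gt, ← integral_mul_const]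
      apply integral_congr_ae (ae_of_all _ ?_)
      intro t
      rw [← hpt t]; ring
    have h3 : (-m⁻¹ + (c':ℂ) * Gt μ m) * m = -1 + (c':ℂ) * (Gt μ m * m) := by
      field_simp
    rw [h3, h2]
  -- imaginary part identity
  have him : ∫ t, t^2 / Complex.normSq (1 + (t:ℂ)*m) ∂μ = 1 / (c' * Complex.normSq m) := by
    have h0 : ((x : ℂ)).im = 0 := by simp
    have h1 : ((-m⁻¹ + (c' : ℂ) * Gt μ m)).im = m.im / Complex.normSq m + c' * (Gt μ m).im := by
      simp [Complex.add_im, Complex.inv_im, Complex.mul_im]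
      ring
    have h2 : (Gt μ m).im = (∫ t, t^2 / Complex.normSq (1 + (t:ℂ)*m) ∂μ) * (-m.im) := by
      have h2a := integral_im (𝕜 := ℂ) hintf
      simp only [RCLike.im_eq_complex_im] at h2a
      rw [Gt, ← h2a, ← integral_mul_const]
      apply integral_congr_ae (ae_of_all _ ?_)
      intro t
      rw [Complex.div_im]
      simp
      ring
    have h3 := congrArg Complex.im heq
    rw [h1, h2] at h3
    simp only [Complex.ofReal_im] at h3
    have hNm : Complex.normSq m ≠ 0 := (Complex.normSq_pos.mpr hm0).ne'
    have hmim : m.im ≠ 0 := hm.ne'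
    field_simp at h3
    have h4 : Complex.normSq m * c' * (∫ t, t^2 / Complex.normSq (1 + (t:ℂ)*m) ∂μ) = 1 := by
      have h5 : m.im * (1 - Complex.normSq m * c' * (∫ t, t^2 / Complex.normSq (1 + (t:ℂ)*m) ∂μ)) = 0 := by
        linear_combination -h3
      rcases mul_eq_zero.mp h5 with h6 | h6
      · exact absurd h6 hmim
      · linear_combination -h6
    rw [eq_div_iff (mul_ne_zero hc'.ne' hNm)]
    linear_combination h4
  -- L² identity
  have hNm : Complex.normSq m ≠ 0 := (Complex.normSq_pos.mpr hm0).ne'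
  have l2 : ∫ t, ‖(1:ℂ) - s t‖^2 ∂μ = 1 / c' := by
    have hpt2 : ∀ t : ℝ, ‖(1:ℂ) - s t‖^2
        = (t^2 / Complex.normSq (1 + (t:ℂ)*m)) * Complex.normSq m := by
      intro t
      rw [hnorm t, div_pow, mul_pow, sq_abs, Complex.sq_norm, Complex.sq_norm]
      field_simp
    rw [integral_congr_ae (ae_of_all _ hpt2), integral_mul_const, him]
    field_simp
  have hsq : 0 < Real.sqrt c' := Real.sqrt_pos.mpr hc'
  have hc'sq : Real.sqrt c' ^ 2 = c' := Real.sq_sqrt hc'.le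
  have hint2 : Integrable (fun t => ‖(1:ℂ) - s t‖^2) μ := by
    apply integrable_bdd (hcont.norm.pow 2) (C := (‖m‖ / m.im)^2) ?_ μ
    intro t
    have h := hbdd t
    have h0 : (0:ℝ) ≤ ‖(1:ℂ) - s t‖ := norm_nonneg _
    simp only [Pi.pow_apply, Real.norm_eq_abs]
    rw [abs_of_nonneg (by positivity)]
    nlinarith
  have l1 : ∫ t, ‖(1:ℂ) - s t‖ ∂μ ≤ 1 / Real.sqrt c' := by
    have hptl : ∀ t : ℝ, ‖(1:ℂ) - s t‖
        ≤ ((Real.sqrt c')⁻¹ + Real.sqrt c' * ‖(1:ℂ) - s t‖^2)/2 := by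
      intro t
      have h := sq_nonneg (‖(1:ℂ) - s t‖ - (Real.sqrt c')⁻¹)
      have hi : (0:ℝ) < (Real.sqrt c')⁻¹ := by positivity
      have hmul : Real.sqrt c' * (Real.sqrt c')⁻¹ = 1 := mul_inv_cancel₀ hsq.ne'
      nlinarith
    have step1 : ∫ t, ‖(1:ℂ) - s t‖ ∂μ
        ≤ ∫ t, ((Real.sqrt c')⁻¹ + Real.sqrt c' * ‖(1:ℂ) - s t‖^2)/2 ∂μ := by
      apply integral_mono hint1.norm ?_ hptl
      exact (((integrable_const _).add (hint2.const_mul _)).div_const 2)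
    have step2 : ∫ t, ((Real.sqrt c')⁻¹ + Real.sqrt c' * ‖(1:ℂ) - s t‖^2)/2 ∂μ
        = ((Real.sqrt c')⁻¹ * μ.real Set.univ + Real.sqrt c' * (1/c'))/2 := by
      rw [integral_div, integral_add (integrable_const _) (hint2.const_mul _),
        integral_const, integral_const_mul, l2]
      simp [smul_eq_mul]
      ring
    have hmass : μ.real Set.univ ≤ 1 := by
      rw [← ENNReal.toReal_one]; exact ENNReal.toReal_mono (by norm_num) hμ
    have step3 : ((Real.sqrt c')⁻¹ * μ.real Set.univ + Real.sqrt c' * (1/c'))/2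
        ≤ 1 / Real.sqrt c' := by
      have h1 : Real.sqrt c' * (1/c') = (Real.sqrt c')⁻¹ := by
        rw [← hc'sq]; field_simp; rw [Real.sqrt_sq hsq.le]
      rw [h1]
      have h2 : (Real.sqrt c')⁻¹ * μ.real Set.univ ≤ (Real.sqrt c')⁻¹ * 1 := by
        apply mul_le_mul_of_nonneg_left hmass (by positivity)
      rw [one_div]
      linarith
    linarith [step1, step2 ▸ step1, step3]
  -- final bound
  have final : x * ‖m‖ ≤ 1 + Real.sqrt c' := by
    have h1 : ‖(x:ℂ)*m‖ = x * ‖m‖ := by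
      rw [norm_mul, Complex.norm_real, Real.norm_eq_abs, abs_of_pos hx]
    rw [← h1, eq2]
    have habs : ‖-1 + (c':ℂ) * ∫ t, ((1:ℂ) - s t) ∂μ‖
        ≤ 1 + c' * ‖∫ t, ((1:ℂ) - s t) ∂μ‖ := by
      calc ‖-1 + (c':ℂ) * ∫ t, ((1:ℂ) - s t) ∂μ‖
          ≤ ‖(-1 : ℂ)‖ + ‖(c':ℂ) * ∫ t, ((1:ℂ) - s t) ∂μ‖ :=
            norm_add_le _ _
        _ = 1 + c' * ‖∫ t, ((1:ℂ) - s t) ∂μ‖ := by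
            rw [norm_mul, Complex.norm_real, Real.norm_eq_abs, abs_of_pos hc']
            simp
    refine habs.trans ?_
    have hni : ‖∫ t, ((1:ℂ) - s t) ∂μ‖ ≤ ∫ t, ‖(1:ℂ) - s t‖ ∂μ := by
      have := norm_integral_le_integral_norm (μ := μ) (f := fun t => (1:ℂ) - s t)
      simpa using this
    have h2 : c' * ‖∫ t, ((1:ℂ) - s t) ∂μ‖ ≤ c' * (1 / Real.sqrt c') := by
      apply mul_le_mul_of_nonneg_left (hni.trans l1) hc'.le
    have h3 : c' * (1 / Real.sqrt c') = Real.sqrt c' := by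
      rw [← hc'sq]; field_simp; rw [Real.sqrt_sq hsq.le]
    linarith
  rw [le_div_iff₀ hx]
  linarith [final]

lemma cont_integrand {w : ℂ} (hw : 0 < w.im) :
    Continuous (fun t : ℝ => (t : ℂ) / (1 + (t : ℂ) * w)) :=
  Complex.continuous_ofReal.div
    (continuous_const.add (Complex.continuous_ofReal.mul continuous_const))
    (fun t => one_add_ne hw t)

lemma Gt_decomp {w : ℂ} (hw : 0 < w.im) (ν : Measure ℝ) [IsFiniteMeasure ν] :
    Gt ν w = ((∫ t, ((t:ℂ)/(1+(t:ℂ)*w)).re ∂ν : ℝ) : ℂ)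
      + ((∫ t, ((t:ℂ)/(1+(t:ℂ)*w)).im ∂ν : ℝ) : ℂ) * Complex.I := by
  have hint := integrable_integrand hw ν
  have h1 := integral_re (𝕜 := ℂ) hint
  have h2 := integral_im (𝕜 := ℂ) hint
  simp only [RCLike.re_eq_complex_re, RCLike.im_eq_complex_im] at h1 h2
  rw [Gt, ← Complex.re_add_im (∫ t, (t:ℂ)/(1+(t:ℂ)*w) ∂ν), ← h1, ← h2]

lemma Gt_tendsto {μ : ℕ → Measure ℝ} [∀ n, IsFiniteMeasure (μ n)] {H : Measure ℝ}
    [IsFiniteMeasure H]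
    (hweak : ∀ g : BoundedContinuousFunction ℝ ℝ,
      Tendsto (fun n => ∫ t, g t ∂(μ n)) atTop (𝓝 (∫ t, g t ∂H)))
    {w : ℂ} (hw : 0 < w.im) :
    Tendsto (fun n => Gt (μ n) w) atTop (𝓝 (Gt H w)) := by
  set fre : BoundedContinuousFunction ℝ ℝ := BoundedContinuousFunction.ofNormedAddCommGroup
    (fun t => ((t:ℂ)/(1+(t:ℂ)*w)).re) (Complex.continuous_re.comp (cont_integrand hw)) (1/w.im)
    (fun t => by
      rw [Real.norm_eq_abs]
      exact (Complex.abs_re_le_norm _).trans (norm_integrand_le hw t)) with hfre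
  set fim : BoundedContinuousFunction ℝ ℝ := BoundedContinuousFunction.ofNormedAddCommGroup
    (fun t => ((t:ℂ)/(1+(t:ℂ)*w)).im) (Complex.continuous_im.comp (cont_integrand hw)) (1/w.im)
    (fun t => by
      rw [Real.norm_eq_abs]
      exact (Complex.abs_im_le_norm _).trans (norm_integrand_le hw t)) with hfim
  have hre := hweak fre
  have him := hweak fim
  have hco : ∀ (ν : Measure ℝ), (∫ t, fre t ∂ν) = ∫ t, ((t:ℂ)/(1+(t:ℂ)*w)).re ∂ν := by
    intro ν; rfl
  have hco' : ∀ (ν : Measure ℝ), (∫ t, fim t ∂ν) = ∫ t, ((t:ℂ)/(1+(t:ℂ)*w)).im ∂ν := by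
    intro ν; rfl
  have key : Tendsto (fun n => ((∫ t, ((t:ℂ)/(1+(t:ℂ)*w)).re ∂(μ n) : ℝ) : ℂ)
      + ((∫ t, ((t:ℂ)/(1+(t:ℂ)*w)).im ∂(μ n) : ℝ) : ℂ) * Complex.I) atTop
      (𝓝 (((∫ t, ((t:ℂ)/(1+(t:ℂ)*w)).re ∂H : ℝ) : ℂ)
      + ((∫ t, ((t:ℂ)/(1+(t:ℂ)*w)).im ∂H : ℝ) : ℂ) * Complex.I)) := by
    apply Tendsto.add
    · exact (Complex.continuous_ofReal.tendsto _).comp (by rw [← hco H]; simpa [hco] using hre)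
    · apply Tendsto.mul_const
      exact (Complex.continuous_ofReal.tendsto _).comp (by rw [← hco' H]; simpa [hco'] using him)
  have e1 : (fun n => Gt (μ n) w) = fun n => ((∫ t, ((t:ℂ)/(1+(t:ℂ)*w)).re ∂(μ n) : ℝ) : ℂ)
      + ((∫ t, ((t:ℂ)/(1+(t:ℂ)*w)).im ∂(μ n) : ℝ) : ℂ) * Complex.I := by
    funext n; exact Gt_decomp hw (μ n)
  rw [e1, Gt_decomp hw H]
  exact key

lemma im_ge_of_mem_ball {w₀ w : ℂ} (h : w ∈ ball w₀ (w₀.im / 2)) :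
    w₀.im / 2 ≤ w.im := by
  have h1 : |w.im - w₀.im| ≤ ‖w - w₀‖ := by
    have := Complex.abs_im_le_norm (w - w₀)
    simpa using this
  have h2 : ‖w - w₀‖ < w₀.im / 2 := by
    rw [mem_ball] at h
    simpa [Complex.dist_eq] using h
  have := abs_sub_abs_le_abs_sub w.im w₀.im
  have h3 : w.im - w₀.im ≥ -(w₀.im/2) := by
    have := neg_abs_le (w.im - w₀.im)
    linarith
  linarith

lemma Gt_differentiableAt {μ : Measure ℝ} [IsFiniteMeasure μ] {w₀ : ℂ} (hw : 0 < w₀.im) :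
    DifferentiableAt ℂ (Gt μ) w₀ := by
  set ε := w₀.im / 2 with hε
  have hεpos : 0 < ε := by positivity
  have him : ∀ w ∈ ball w₀ ε, 0 < w.im := fun w hball =>
    lt_of_lt_of_le hεpos (im_ge_of_mem_ball hball)
  set F' : ℂ → ℝ → ℂ := fun w t => -((t:ℂ)^2 / ((1 + (t:ℂ)*w)^2)) with hF'
  have hderiv : ∀ w ∈ ball w₀ ε, ∀ t : ℝ,
      HasDerivAt (fun v => (t:ℂ)/(1+(t:ℂ)*v)) (F' w t) w := by
    intro w hball t
    have hne := one_add_ne (him w hball) t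
    have h1 : HasDerivAt (fun v : ℂ => (1:ℂ) + (t:ℂ)*v) (t:ℂ) w := by
      simpa using ((hasDerivAt_id w).const_mul (t:ℂ)).const_add 1
    have h2 := h1.inv hne
    have h3 := h2.const_mul (t:ℂ)
    have : (t:ℂ) * (-(t:ℂ) / ((1 + (t:ℂ)*w)^2)) = F' w t := by
      rw [hF']; ring
    rw [this] at h3
    apply h3.congr_of_eventuallyEq
    filter_upwards [] with v
    rw [div_eq_mul_inv]; rfl
  have hbound : ∀ w ∈ ball w₀ ε, ∀ t : ℝ, ‖F' w t‖ ≤ (2 / w₀.im)^2 := by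
    intro w hball t
    have hwim := him w hball
    rcases eq_or_ne t 0 with rfl | ht
    · simp [hF']; positivity
    · have h2 := abs_one_add_ge hwim t
      have habs : (0:ℝ) < |t| := abs_pos.mpr ht
      have hp : (0:ℝ) < ‖1 + (t:ℂ)*w‖ := lt_of_lt_of_le (by positivity) h2
      have hge : |t| * ε ≤ ‖1 + (t:ℂ)*w‖ := by
        have := im_ge_of_mem_ball hball
        nlinarith
      rw [hF']
      simp only [norm_neg, norm_div, norm_pow]
      rw [Complex.norm_real, Real.norm_eq_abs]
      rw [div_le_iff₀ (by positivity)]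
      have h4 : (|t| * ε) ^ 2 ≤ ‖1 + (t:ℂ)*w‖ ^ 2 :=
        pow_le_pow_left₀ (by positivity) hge 2
      have h5 : (2 / w₀.im) ^ 2 * ((|t| * ε) ^ 2) = |t| ^ 2 := by
        rw [hε, mul_pow]; field_simp
      nlinarith [sq_nonneg (2 / w₀.im)]
  have main := hasDerivAt_integral_of_dominated_loc_of_deriv_le (μ := μ)
    (F := fun w t => (t:ℂ)/(1+(t:ℂ)*w)) (F' := F') (x₀ := w₀)
    (bound := fun _ => (2 / w₀.im)^2) (ball_mem_nhds w₀ hεpos)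
    ?_ (integrable_integrand hw μ) ?_ ?_ (integrable_const _) ?_
  · exact main.2.differentiableAt
  · filter_upwards [IsOpen.mem_nhds (isOpen_lt continuous_const Complex.continuous_im) hw]
      with w hw'
    exact (cont_integrand hw').aestronglyMeasurable
  · apply Continuous.aestronglyMeasurable
    apply Continuous.neg
    apply Continuous.div (by fun_prop)
    · fun_prop
    · intro t
      exact pow_ne_zero 2 (one_add_ne hw t)
  · exact ae_of_all _ fun t w hball => hbound w hball t
  · exact ae_of_all _ fun t w hball => hderiv w hball t

lemma g_differentiableAt (c' : ℝ) (μ : Measure ℝ) [IsFiniteMeasure μ] {w₀ : ℂ}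
    (hw : 0 < w₀.im) :
    DifferentiableAt ℂ (fun w => -w⁻¹ + (c':ℂ) * Gt μ w) w₀ := by
  have h0 : w₀ ≠ 0 := by intro h; rw [h] at hw; simp at hw
  apply DifferentiableAt.add
  · exact (differentiableAt_inv h0).neg
  · exact (Gt_differentiableAt hw).const_mul _

lemma exists_zero_of_small_center {h : ℂ → ℂ} {z₀ : ℂ} {r δ : ℝ} (hr : 0 < r)
    (hdiff : DifferentiableOn ℂ h (closedBall z₀ r)) (hδ : 0 < δ)
    (hcenter : ‖h z₀‖ < δ) (hbdry : ∀ w ∈ sphere z₀ r, δ ≤ ‖h w‖) :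
    ∃ z ∈ closedBall z₀ r, h z = 0 := by
  by_contra hcon
  push_neg at hcon
  have hd2 : DifferentiableOn ℂ (fun w => (h w)⁻¹) (closedBall z₀ r) :=
    hdiff.inv (fun w hw => hcon w hw)
  have hcl : closure (ball z₀ r) = closedBall z₀ r := closure_ball z₀ hr.ne'
  have hdc : DiffContOnCl ℂ (fun w => (h w)⁻¹) (ball z₀ r) := by
    constructor
    · exact hd2.mono ball_subset_closedBall
    · rw [hcl]; exact hd2.continuousOn
  have hfr : ∀ w ∈ frontier (ball z₀ r), ‖(h w)⁻¹‖ ≤ δ⁻¹ := by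
    rw [frontier_ball z₀ hr.ne']
    intro w hw
    rw [norm_inv]
    exact inv_anti₀ hδ (hbdry w hw)
  have hin : z₀ ∈ closure (ball z₀ r) := by rw [hcl]; exact mem_closedBall_self hr.le
  have hmax := Complex.norm_le_of_forall_mem_frontier_norm_le isBounded_ball hdc hfr hin
  rw [norm_inv] at hmax
  have hz0 : h z₀ ≠ 0 := hcon z₀ (mem_closedBall_self hr.le)
  have hpos : 0 < ‖h z₀‖ := norm_pos_iff.mpr hz0
  have hge : δ ≤ ‖h z₀‖ := (inv_le_inv₀ hpos hδ).mp hmax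
  linarith

lemma im_ge_of_mem_cb {z₀ w : ℂ} {r : ℝ} (h : w ∈ closedBall z₀ r) :
    z₀.im - r ≤ w.im := by
  have h1 : |w.im - z₀.im| ≤ ‖w - z₀‖ := by
    have := Complex.abs_im_le_norm (w - z₀)
    simpa using this
  have h2 : ‖w - z₀‖ ≤ r := by
    rw [mem_closedBall] at h
    simpa [Complex.dist_eq] using h
  have := neg_abs_le (w.im - z₀.im)
  linarith

lemma eventually_uniform {μ : ℕ → Measure ℝ} [∀ n, IsFiniteMeasure (μ n)] {H : Measure ℝ}
    [IsFiniteMeasure H] (hμm : ∀ n, μ n Set.univ ≤ 1) (hHm : H Set.univ ≤ 1)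
    (hpt : ∀ w : ℂ, 0 < w.im → Tendsto (fun n => Gt (μ n) w) atTop (𝓝 (Gt H w)))
    {z₀ : ℂ} {r : ℝ} (hr : 0 < r) (hlt : r < z₀.im) {ε : ℝ} (hε : 0 < ε) :
    ∀ᶠ n in atTop, ∀ w ∈ closedBall z₀ r, ‖Gt (μ n) w - Gt H w‖ ≤ ε := by
  set κ := z₀.im - r with hκdef
  have hκ : 0 < κ := by simp [hκdef]; linarith
  have him : ∀ w ∈ closedBall z₀ r, κ ≤ w.im := fun w hw => im_ge_of_mem_cb hw
  have himpos : ∀ w ∈ closedBall z₀ r, 0 < w.im := fun w hw => lt_of_lt_of_le hκ (him w hw)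
  set η := ε * κ ^ 2 / 3 with hηdef
  have hη : 0 < η := by positivity
  have hcov : closedBall z₀ r ⊆ ⋃ c ∈ closedBall z₀ r, ball c η := by
    intro w hw
    exact Set.mem_biUnion hw (mem_ball_self hη)
  obtain ⟨S, hSsub, hSfin, hScov⟩ :=
    (isCompact_closedBall z₀ r).elim_finite_subcover_image
      (fun c _ => isOpen_ball) hcov
  have hev : ∀ᶠ n in atTop, ∀ c ∈ S, ‖Gt (μ n) c - Gt H c‖ ≤ ε / 3 := by
    rw [Set.Finite.eventually_all hSfin]
    intro c hc
    have hcim : 0 < c.im := himpos c (hSsub hc)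
    have := Metric.tendsto_nhds.mp (hpt c hcim) (ε/3) (by positivity)
    filter_upwards [this] with n hn
    rw [dist_eq_norm] at hn
    exact hn.le
  filter_upwards [hev] with n hn w hw
  obtain ⟨c, hcS, hwc⟩ : ∃ c ∈ S, w ∈ ball c η := by
    have := hScov hw
    simpa using this
  have hcCB : c ∈ closedBall z₀ r := hSsub hcS
  have l1 : ‖Gt (μ n) w - Gt (μ n) c‖ ≤ ‖w - c‖ / κ ^ 2 :=
    Gt_lip hκ (him w hw) (him c hcCB) (hμm n)
  have l2 : ‖Gt H c - Gt H w‖ ≤ ‖c - w‖ / κ ^ 2 :=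
    Gt_lip hκ (him c hcCB) (him w hw) hHm
  have hwcn : ‖w - c‖ < η := by
    rw [mem_ball, dist_eq_norm] at hwc
    exact hwc
  have hcwn : ‖c - w‖ < η := by rw [norm_sub_rev]; exact hwcn
  have hκ0 : κ ≠ 0 := hκ.ne'
  have hstep : η / κ ^ 2 = ε / 3 := by
    rw [hηdef]
    field_simp
  have b1 : ‖Gt (μ n) w - Gt (μ n) c‖ ≤ ε / 3 := by
    refine l1.trans ?_
    rw [← hstep]
    gcongr
  have b2 : ‖Gt H c - Gt H w‖ ≤ ε / 3 := by
    refine l2.trans ?_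
    rw [← hstep]
    gcongr
  have b3 := hn c hcS
  calc ‖Gt (μ n) w - Gt H w‖
      = ‖(Gt (μ n) w - Gt (μ n) c) + ((Gt (μ n) c - Gt H c) + (Gt H c - Gt H w))‖ := by
        ring_nf
    _ ≤ ‖Gt (μ n) w - Gt (μ n) c‖ + ‖(Gt (μ n) c - Gt H c) + (Gt H c - Gt H w)‖ :=
        norm_add_le _ _
    _ ≤ ‖Gt (μ n) w - Gt (μ n) c‖ + (‖Gt (μ n) c - Gt H c‖ + ‖Gt H c - Gt H w‖) := by
        have := norm_add_le (Gt (μ n) c - Gt H c) (Gt H c - Gt H w)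
        linarith
    _ ≤ ε / 3 + (ε / 3 + ε / 3) := by linarith
    _ = ε := by ring

lemma key1 {μ : ℕ → Measure ℝ} [∀ n, IsFiniteMeasure (μ n)] {H : Measure ℝ}
    [IsFiniteMeasure H]
    (hμm : ∀ n, μ n Set.univ ≤ 1)
    (hpt : ∀ w : ℂ, 0 < w.im → Tendsto (fun n => Gt (μ n) w) atTop (𝓝 (Gt H w)))
    {c' : ℕ → ℝ} {c : ℝ} (hc' : ∀ n, 0 < c' n) (hcc : Tendsto c' atTop (𝓝 c))
    {a b x : ℝ} (ha : 0 < a)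
    {y : ℕ → ℝ} (hy : ∀ n, y n ∈ Set.Icc a b) (hyx : Tendsto y atTop (𝓝 x))
    {sol : ℕ → ℂ} (hsol0 : ∀ n, 0 ≤ (sol n).im)
    (hsoleq : ∀ n, ((y n : ℝ) : ℂ) = -(sol n)⁻¹ + ((c' n : ℝ) : ℂ) * Gt (μ n) (sol n))
    (hno : ∀ w : ℂ, 0 < w.im → (x : ℂ) = -w⁻¹ + (c : ℂ) * Gt H w → False) :
    Tendsto (fun n => (sol n).im) atTop (𝓝 0) := by
  by_contra hcon
  have hexists : ∃ ε > (0:ℝ), ∃ᶠ n in atTop, ε ≤ (sol n).im := by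
    by_contra h2
    push_neg at h2
    apply hcon
    refine tendsto_order.2 ⟨fun ε hε => ?_, fun ε hε => ?_⟩
    · filter_upwards [] with n
      exact lt_of_lt_of_le hε (hsol0 n)
    · have h3 := h2 ε hε
      exact h3
  obtain ⟨ε, hε, hfreq⟩ := hexists
  set B := (1 + Real.sqrt (c + 1)) / a with hB
  have hc1 : ∀ᶠ n in atTop, c' n < c + 1 := by
    have : c < c + 1 := by linarith
    exact hcc.eventually_lt_const this
  have hfreq2 : ∃ᶠ n in atTop, (ε ≤ (sol n).im ∧ c' n < c + 1) :=
    hfreq.and_eventually hc1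
  obtain ⟨φ, hφmono, hφ⟩ := Filter.extraction_of_frequently_atTop hfreq2
  have hbd : ∀ k, sol (φ k) ∈ closedBall (0:ℂ) B := by
    intro k
    obtain ⟨h1, h2⟩ := hφ k
    have him : 0 < (sol (φ k)).im := lt_of_lt_of_le hε h1
    have hya : 0 < y (φ k) := lt_of_lt_of_le ha (hy (φ k)).1
    have hb1 := sol_bound (hμm (φ k)) (hc' (φ k)) hya him (hsoleq (φ k))
    have hb2 : (1 + Real.sqrt (c' (φ k))) / y (φ k) ≤ B := by
      rw [hB]
      apply div_le_div₀ (by positivity)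
      · have := Real.sqrt_le_sqrt (le_of_lt h2)
        linarith
      · exact ha
      · exact (hy (φ k)).1
    rw [mem_closedBall, dist_zero_right]
    exact hb1.trans hb2
  obtain ⟨w, hwmem, ψ, hψmono, hψtend⟩ :=
    tendsto_subseq_of_bounded (isBounded_closedBall (x := (0:ℂ)) (r := B)) hbd
  set θ : ℕ → ℕ := φ ∘ ψ with hθ
  have hθmono : StrictMono θ := hφmono.comp hψmono
  have hθtop : Tendsto θ atTop atTop := hθmono.tendsto_atTop
  have hwim : ε ≤ w.im := by
    apply ge_of_tendsto ((Complex.continuous_im.tendsto w).comp hψtend)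
    filter_upwards [] with k
    exact (hφ (ψ k)).1
  have hwpos : 0 < w.im := lt_of_lt_of_le hε hwim
  have hw0 : w ≠ 0 := by intro h; rw [h] at hwpos; simp at hwpos
  -- limit of the Gt term
  have hGt : Tendsto (fun k => Gt (μ (θ k)) (sol (θ k))) atTop (𝓝 (Gt H w)) := by
    rw [tendsto_iff_norm_sub_tendsto_zero]
    have hb : ∀ k, ‖Gt (μ (θ k)) (sol (θ k)) - Gt H w‖
        ≤ ‖sol (θ k) - w‖ / ε ^ 2 + ‖Gt (μ (θ k)) w - Gt H w‖ := by
      intro k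
      have l1 : ‖Gt (μ (θ k)) (sol (θ k)) - Gt (μ (θ k)) w‖ ≤ ‖sol (θ k) - w‖ / ε ^ 2 :=
        Gt_lip hε (hφ (ψ k)).1 hwim (hμm (θ k))
      calc ‖Gt (μ (θ k)) (sol (θ k)) - Gt H w‖
          ≤ ‖Gt (μ (θ k)) (sol (θ k)) - Gt (μ (θ k)) w‖ + ‖Gt (μ (θ k)) w - Gt H w‖ := by
            have := norm_add_le (Gt (μ (θ k)) (sol (θ k)) - Gt (μ (θ k)) w)
              (Gt (μ (θ k)) w - Gt H w)
            simpa using this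
        _ ≤ _ := by linarith
    apply squeeze_zero (fun k => norm_nonneg _) hb
    have t1 : Tendsto (fun k => ‖sol (θ k) - w‖ / ε ^ 2) atTop (𝓝 0) := by
      have h1 : Tendsto (fun k => sol (θ k) - w) atTop (𝓝 0) := by
        have := hψtend.sub (tendsto_const_nhds (x := w))
        simpa [hθ] using this
      have := (h1.norm).div_const (ε ^ 2)
      simpa using this
    have t2 : Tendsto (fun k => ‖Gt (μ (θ k)) w - Gt H w‖) atTop (𝓝 0) := by
      have h1 := (hpt w hwpos).comp hθtop
      have := (h1.sub (tendsto_const_nhds (x := Gt H w))).norm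
      simpa using this
    simpa using t1.add t2
  -- limit equation
  have hLHS : Tendsto (fun k => ((y (θ k) : ℝ) : ℂ)) atTop (𝓝 ((x : ℝ) : ℂ)) :=
    (Complex.continuous_ofReal.tendsto x).comp (hyx.comp hθtop)
  have hRHS : Tendsto (fun k => -(sol (θ k))⁻¹ + ((c' (θ k) : ℝ) : ℂ) * Gt (μ (θ k)) (sol (θ k)))
      atTop (𝓝 (-w⁻¹ + (c : ℂ) * Gt H w)) := by
    apply Tendsto.add
    · exact (hψtend.inv₀ hw0).neg
    · apply Tendsto.mul ?_ hGt
      exact (Complex.continuous_ofReal.tendsto c).comp (hcc.comp hθtop)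
  have heq : ((x : ℝ) : ℂ) = -w⁻¹ + (c : ℂ) * Gt H w := by
    apply tendsto_nhds_unique ?_ hRHS
    have : (fun k => ((y (θ k) : ℝ) : ℂ))
        = fun k => -(sol (θ k))⁻¹ + ((c' (θ k) : ℝ) : ℂ) * Gt (μ (θ k)) (sol (θ k)) := by
      funext k; exact hsoleq (θ k)
    rw [← this]
    exact hLHS
  exact hno w hwpos heq

lemma g_not_const {H : Measure ℝ} [IsFiniteMeasure H] (hHm : H Set.univ ≤ 1)
    {c a x : ℝ} (hc : 0 < c) (ha : 0 < a) (hax : a ≤ x) {m₀ : ℂ} (hm₀ : 0 < m₀.im)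
    (hloc : ∀ᶠ z in 𝓝 m₀, (fun w => -w⁻¹ + (c:ℂ) * Gt H w) z = (x:ℂ)) : False := by
  set U : Set ℂ := {z : ℂ | 0 < z.im} with hU
  have hUopen : IsOpen U := isOpen_lt continuous_const Complex.continuous_im
  have hUpre : IsPreconnected U := (convex_halfSpace_im_gt 0).isPreconnected
  have hganal : AnalyticOnNhd ℂ (fun w => -w⁻¹ + (c:ℂ) * Gt H w) U := by
    intro z hz
    apply DifferentiableOn.analyticAt (s := U)
    · intro v hv
      exact (g_differentiableAt c H hv).differentiableWithinAt
    · exact hUopen.mem_nhds hz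
  have hconst : AnalyticOnNhd ℂ (fun _ : ℂ => (x:ℂ)) U := fun z _ => analyticAt_const
  have heqOn := hganal.eqOn_of_preconnected_of_eventuallyEq hconst hUpre
    (show m₀ ∈ U from hm₀) hloc
  set yv : ℝ := 2 * (1 + c) / a with hyv
  have hyvpos : 0 < yv := by positivity
  set wv : ℂ := Complex.I * (yv : ℝ) with hwv
  have hwvim : wv.im = yv := by simp [hwv]
  have hwvU : wv ∈ U := by rw [hU]; simp only [Set.mem_setOf_eq, hwvim]; exact hyvpos
  have heval := heqOn hwvU
  have hwv0 : wv ≠ 0 := by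
    intro h
    have := congrArg Complex.im h
    rw [hwvim] at this
    simp at this
    linarith
  have hnorm : ‖-wv⁻¹ + (c:ℂ) * Gt H wv‖ ≤ (1 + c) / yv := by
    calc ‖-wv⁻¹ + (c:ℂ) * Gt H wv‖ ≤ ‖-wv⁻¹‖ + ‖(c:ℂ) * Gt H wv‖ := norm_add_le _ _
      _ ≤ 1 / yv + c * (1 / yv) := by
          apply add_le_add
          · rw [norm_neg, norm_inv]
            have h1 : yv ≤ ‖wv‖ := by
              rw [← hwvim]
              exact (le_abs_self _).trans (Complex.abs_im_le_norm wv)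
            rw [one_div]
            exact inv_anti₀ hyvpos h1
          · rw [norm_mul]
            have h2 : ‖((c:ℝ):ℂ)‖ = c := by
              rw [Complex.norm_real, Real.norm_eq_abs, abs_of_pos hc]
            rw [h2]
            apply mul_le_mul_of_nonneg_left ?_ hc.le
            have h3 := norm_Gt_le (hwvim ▸ hyvpos : 0 < wv.im) hHm
            rw [hwvim] at h3
            exact h3
      _ = (1 + c) / yv := by ring
  simp only at heval
  rw [heval] at hnorm
  have hxnorm : ‖((x:ℝ):ℂ)‖ = x := by
    rw [Complex.norm_real, Real.norm_eq_abs, abs_of_pos (lt_of_lt_of_le ha hax)]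
  rw [hxnorm] at hnorm
  have : (1 + c) / yv = a / 2 := by rw [hyv]; field_simp
  rw [this] at hnorm
  linarith

lemma key2 {μ : ℕ → Measure ℝ} [∀ n, IsFiniteMeasure (μ n)] {H : Measure ℝ}
    [IsFiniteMeasure H]
    (hμm : ∀ n, μ n Set.univ ≤ 1) (hHm : H Set.univ ≤ 1)
    (hpt : ∀ w : ℂ, 0 < w.im → Tendsto (fun n => Gt (μ n) w) atTop (𝓝 (Gt H w)))
    {c' : ℕ → ℝ} {c : ℝ} (hc : 0 < c) (hc' : ∀ n, 0 < c' n) (hcc : Tendsto c' atTop (𝓝 c))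
    {a x : ℝ} (ha : 0 < a) (hax : a ≤ x)
    {y : ℕ → ℝ} (hyx : Tendsto y atTop (𝓝 x))
    {m₀ : ℂ} (hm₀ : 0 < m₀.im) (heq0 : ((x:ℝ):ℂ) = -m₀⁻¹ + (c:ℂ) * Gt H m₀)
    {sol : ℕ → ℂ}
    (huniq : ∀ n, ∀ v : ℂ, 0 < v.im →
      ((y n : ℝ) : ℂ) = -v⁻¹ + ((c' n : ℝ) : ℂ) * Gt (μ n) v → v = sol n) :
    Tendsto sol atTop (𝓝 m₀) := by
  set g : ℂ → ℂ := fun w => -w⁻¹ + (c:ℂ) * Gt H w with hg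
  have hne : ∀ᶠ z in 𝓝[≠] m₀, g z ≠ ((x:ℝ):ℂ) := by
    have hga : AnalyticAt ℂ g m₀ := by
      apply DifferentiableOn.analyticAt (s := {z : ℂ | 0 < z.im})
      · intro v hv
        exact (g_differentiableAt c H hv).differentiableWithinAt
      · exact (isOpen_lt continuous_const Complex.continuous_im).mem_nhds hm₀
    rcases hga.eventually_eq_or_eventually_ne
        (analyticAt_const (v := ((x:ℝ):ℂ))) with hl | hr
    · exact absurd hl (fun h => g_not_const hHm hc ha hax hm₀ h)
    · exact hr
  rw [eventually_nhdsWithin_iff, Metric.eventually_nhds_iff] at hne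
  obtain ⟨r₁, hr₁pos, hr₁⟩ := hne
  rw [Metric.tendsto_nhds]
  intro ε hε
  set r : ℝ := min (min (ε/2) (r₁/2)) (m₀.im/2) with hrdef
  have hrpos : 0 < r :=
    lt_min (lt_min (by linarith) (by linarith)) (by linarith)
  have hrε : r ≤ ε/2 := (min_le_left _ _).trans (min_le_left _ _)
  have hrr₁ : r ≤ r₁/2 := (min_le_left _ _).trans (min_le_right _ _)
  have hrim : r ≤ m₀.im/2 := min_le_right _ _
  set κ := m₀.im/2 with hκdef
  have hκpos : 0 < κ := by rw [hκdef]; linarith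
  have himcb : ∀ w ∈ closedBall m₀ r, κ ≤ w.im := by
    intro w hw
    have := im_ge_of_mem_cb hw
    rw [hκdef]; linarith
  have himcbpos : ∀ w ∈ closedBall m₀ r, 0 < w.im := fun w hw =>
    lt_of_lt_of_le hκpos (himcb w hw)
  -- minimum of ‖g - x‖ on the sphere
  have hsne : (sphere m₀ r).Nonempty := NormedSpace.sphere_nonempty.mpr hrpos.le
  have hgc : ContinuousOn (fun w => ‖g w - ((x:ℝ):ℂ)‖) (sphere m₀ r) := by
    apply ContinuousOn.norm
    apply ContinuousOn.sub ?_ continuousOn_const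
    intro w hw
    have hwim : 0 < w.im := himcbpos w (sphere_subset_closedBall hw)
    exact ((g_differentiableAt c H hwim).continuousAt).continuousWithinAt
  obtain ⟨wmin, hwmin_mem, hwmin⟩ := (isCompact_sphere m₀ r).exists_isMinOn hsne hgc
  set δ := ‖g wmin - ((x:ℝ):ℂ)‖ with hδdef
  have hδpos : 0 < δ := by
    rw [hδdef, norm_pos_iff, sub_ne_zero]
    apply hr₁
    · rw [mem_sphere] at hwmin_mem
      rw [hwmin_mem]; linarith
    · simp only [Set.mem_compl_iff, Set.mem_singleton_iff]
      intro h
      rw [h, mem_sphere, dist_self] at hwmin_mem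
      linarith [hwmin_mem ▸ hrpos]
  have hδmin : ∀ w ∈ sphere m₀ r, δ ≤ ‖g w - ((x:ℝ):ℂ)‖ := fun w hw => hwmin hw
  -- eventual bounds
  set M := 2 / m₀.im with hM
  have hMpos : 0 < M := by rw [hM]; positivity
  have hGtHbd : ∀ w ∈ closedBall m₀ r, ‖Gt H w‖ ≤ M := by
    intro w hw
    have h1 := norm_Gt_le (himcbpos w hw) hHm
    refine h1.trans ?_
    rw [hM]
    rw [div_le_div_iff₀ (himcbpos w hw) (by linarith : (0:ℝ) < m₀.im)]
    have := himcb w hw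
    rw [hκdef] at this
    nlinarith
  have ea := eventually_uniform hμm hHm hpt hrpos
    (by linarith : r < m₀.im) (ε := δ/(16*(c+1))) (by positivity)
  have eb : ∀ᶠ n in atTop, dist (c' n) c < δ/(16*(M+1)) :=
    Metric.tendsto_nhds.mp hcc _ (by positivity)
  have ec : ∀ᶠ n in atTop, c' n < c + 1 := hcc.eventually_lt_const (by linarith)
  have ed : ∀ᶠ n in atTop, dist (y n) x < δ/4 :=
    Metric.tendsto_nhds.mp hyx _ (by positivity)
  filter_upwards [ea, eb, ec, ed] with n hna hnb hnc hnd
  -- uniform bound between g_n and g on the closed ball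
  have hgng : ∀ w ∈ closedBall m₀ r,
      ‖(-w⁻¹ + ((c' n : ℝ):ℂ) * Gt (μ n) w) - g w‖ ≤ δ/8 := by
    intro w hw
    have h1 : (-w⁻¹ + ((c' n : ℝ):ℂ) * Gt (μ n) w) - g w
        = ((c' n : ℝ):ℂ) * (Gt (μ n) w - Gt H w) + (((c' n : ℝ):ℂ) - (c:ℂ)) * Gt H w := by
      rw [hg]; ring
    rw [h1]
    have hb1 : ‖((c' n : ℝ):ℂ) * (Gt (μ n) w - Gt H w)‖ ≤ (c+1) * (δ/(16*(c+1))) := by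
      rw [norm_mul]
      apply mul_le_mul ?_ (hna w hw) (norm_nonneg _) (by linarith)
      rw [Complex.norm_real, Real.norm_eq_abs, abs_of_pos (hc' n)]
      linarith
    have hb2 : ‖(((c' n : ℝ):ℂ) - (c:ℂ)) * Gt H w‖ ≤ (δ/(16*(M+1))) * M := by
      rw [norm_mul]
      apply mul_le_mul ?_ (hGtHbd w hw) (norm_nonneg _) (by positivity)
      have : ((c' n : ℝ):ℂ) - (c:ℂ) = (((c' n - c : ℝ)):ℂ) := by push_cast; ring
      rw [this, Complex.norm_real, Real.norm_eq_abs]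
      rw [Real.dist_eq] at hnb
      exact hnb.le
    have hs1 : (c+1) * (δ/(16*(c+1))) = δ/16 := by field_simp
    have hs2 : (δ/(16*(M+1))) * M ≤ δ/16 := by
      rw [div_mul_eq_mul_div, div_le_div_iff₀ (by positivity) (by norm_num)]
      nlinarith
    calc ‖((c' n : ℝ):ℂ) * (Gt (μ n) w - Gt H w) + (((c' n : ℝ):ℂ) - (c:ℂ)) * Gt H w‖
        ≤ ‖((c' n : ℝ):ℂ) * (Gt (μ n) w - Gt H w)‖ + ‖(((c' n : ℝ):ℂ) - (c:ℂ)) * Gt H w‖ :=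
          norm_add_le _ _
      _ ≤ δ/16 + δ/16 := by
          have h1' : ‖((c' n : ℝ):ℂ) * (Gt (μ n) w - Gt H w)‖ ≤ δ/16 := by
            rw [← hs1]; exact hb1
          exact add_le_add h1' (hb2.trans hs2)
      _ = δ/8 := by ring
  -- apply the zero-existence lemma
  set hfun : ℂ → ℂ := fun w => (-w⁻¹ + ((c' n : ℝ):ℂ) * Gt (μ n) w) - ((y n : ℝ):ℂ) with hhfun
  have hdiff : DifferentiableOn ℂ hfun (closedBall m₀ r) := by
    intro w hw
    exact ((g_differentiableAt (c' n) (μ n) (himcbpos w hw)).sub_const _).differentiableWithinAt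
  have hcenter : ‖hfun m₀‖ < δ/2 := by
    have hgm₀ : g m₀ = ((x:ℝ):ℂ) := by rw [hg]; exact heq0.symm
    have h1 : hfun m₀ = ((-m₀⁻¹ + ((c' n : ℝ):ℂ) * Gt (μ n) m₀) - g m₀)
        + (((x:ℝ):ℂ) - ((y n : ℝ):ℂ)) := by
      rw [hhfun, hgm₀]; ring
    rw [h1]
    have hb1 := hgng m₀ (mem_closedBall_self hrpos.le)
    have hb2 : ‖((x:ℝ):ℂ) - ((y n : ℝ):ℂ)‖ < δ/4 := by
      have : ((x:ℝ):ℂ) - ((y n : ℝ):ℂ) = (((x - y n : ℝ)):ℂ) := by push_cast; ring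
      rw [this, Complex.norm_real, Real.norm_eq_abs]
      rw [Real.dist_eq, abs_sub_comm] at hnd
      exact hnd
    calc ‖_ + _‖ ≤ ‖(-m₀⁻¹ + ((c' n : ℝ):ℂ) * Gt (μ n) m₀) - g m₀‖
          + ‖((x:ℝ):ℂ) - ((y n : ℝ):ℂ)‖ := norm_add_le _ _
      _ < δ/8 + δ/4 := by
          apply add_lt_add_of_le_of_lt hb1 hb2
      _ < δ/2 := by linarith
  have hbdry : ∀ w ∈ sphere m₀ r, δ/2 ≤ ‖hfun w‖ := by
    intro w hw
    have hwcb : w ∈ closedBall m₀ r := sphere_subset_closedBall hw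
    have h1 : g w - ((x:ℝ):ℂ) = hfun w - ((-w⁻¹ + ((c' n : ℝ):ℂ) * Gt (μ n) w) - g w)
        - (((x:ℝ):ℂ) - ((y n : ℝ):ℂ)) := by
      rw [hhfun]; ring
    have hb0 := hδmin w hw
    rw [h1] at hb0
    have hb1 := hgng w hwcb
    have hb2 : ‖((x:ℝ):ℂ) - ((y n : ℝ):ℂ)‖ < δ/4 := by
      have : ((x:ℝ):ℂ) - ((y n : ℝ):ℂ) = (((x - y n : ℝ)):ℂ) := by push_cast; ring
      rw [this, Complex.norm_real, Real.norm_eq_abs]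
      rw [Real.dist_eq, abs_sub_comm] at hnd
      exact hnd
    have htri : ‖hfun w - ((-w⁻¹ + ((c' n : ℝ):ℂ) * Gt (μ n) w) - g w) - (((x:ℝ):ℂ) - ((y n : ℝ):ℂ))‖
        ≤ ‖hfun w‖ + ‖(-w⁻¹ + ((c' n : ℝ):ℂ) * Gt (μ n) w) - g w‖ + ‖((x:ℝ):ℂ) - ((y n : ℝ):ℂ)‖ := by
      calc ‖_‖ ≤ ‖hfun w - ((-w⁻¹ + ((c' n : ℝ):ℂ) * Gt (μ n) w) - g w)‖
            + ‖((x:ℝ):ℂ) - ((y n : ℝ):ℂ)‖ := norm_sub_le _ _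
        _ ≤ _ := by
            have := norm_sub_le (hfun w) ((-w⁻¹ + ((c' n : ℝ):ℂ) * Gt (μ n) w) - g w)
            linarith
    linarith
  obtain ⟨z, hzcb, hz0⟩ := exists_zero_of_small_center hrpos hdiff (by positivity) hcenter hbdry
  have hzeq : ((y n : ℝ):ℂ) = -z⁻¹ + ((c' n : ℝ):ℂ) * Gt (μ n) z := by
    rw [hhfun] at hz0
    have := sub_eq_zero.mp hz0
    exact this.symm
  have hzsol := huniq n z (himcbpos z hzcb) hzeq
  rw [← hzsol]
  rw [mem_closedBall] at hzcb
  calc dist z m₀ ≤ r := hzcb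
    _ < ε := by linarith

lemma specMeasure_mass {m : ℕ} {A : Matrix (Fin m) (Fin m) ℝ} (hA : A.IsHermitian) :
    specMeasure hA Set.univ ≤ 1 := by
  rw [specMeasure, Measure.smul_apply, Measure.finset_sum_apply]
  simp only [measure_univ, Finset.sum_const, Finset.card_univ, Fintype.card_fin, nsmul_eq_mul,
    mul_one, smul_eq_mul]
  rcases Nat.eq_zero_or_pos m with rfl | hm
  · simp
  · rw [ENNReal.inv_mul_cancel]
    · exact Nat.cast_ne_zero.mpr hm.ne'
    · exact ENNReal.natCast_ne_top m

lemma specMeasure_finite {m : ℕ} {A : Matrix (Fin m) (Fin m) ℝ} (hA : A.IsHermitian) :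
    IsFiniteMeasure (specMeasure hA) :=
  ⟨lt_of_le_of_lt (specMeasure_mass hA) ENNReal.one_lt_top⟩

/-- Lemma 2: along sequences `x_n → x` in the support `[a,b]`,
`f_{c_n,H_n}(x_n) - f_{c,H}(x_n) → 0`, where `π f_{c',H'}(y)` is the imaginary part of the
solution of the Marcenko–Pastur inverse equation at `y` for parameters `(c',H')`. -/
theorem densities_approximate_along_converging_sequences
    (p : ℕ → ℕ)
    (c : ℝ) (hc : c ∈ Set.Ioo (0 : ℝ) 1)
    (cs : ℕ → ℝ) (hcs0 : ∀ n, 0 < cs n) (hcs : Tendsto cs atTop (𝓝 c))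
    (T : (n : ℕ) → Matrix (Fin (p n)) (Fin (p n)) ℝ)
    (hT : ∀ n, (T n).PosDef)
    (C : ℝ) (hC : ∀ n i, (hT n).isHermitian.eigenvalues i ≤ C)
    (H : Measure ℝ) [IsProbabilityMeasure H]
    (hweak : ∀ g : BoundedContinuousFunction ℝ ℝ,
      Tendsto (fun n => ∫ t, g t ∂(specMeasure (hT n).isHermitian))
        atTop (𝓝 (∫ t, g t ∂H)))
    (a b : ℝ) (ha : 0 < a) (hab : a < b)
    (mn : ℕ → ℝ → ℂ) (minf : ℝ → ℂ)
    (hmn : ∀ n : ℕ, ∀ x ∈ Set.Icc a b,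
      0 ≤ (mn n x).im ∧
      (x : ℂ) = -(mn n x)⁻¹ + ((cs n : ℝ) : ℂ) *
          ∫ t, (t : ℂ) / (1 + (t : ℂ) * mn n x) ∂(specMeasure (hT n).isHermitian) ∧
      ∀ w : ℂ, 0 < w.im →
        (x : ℂ) = -w⁻¹ + ((cs n : ℝ) : ℂ) *
            ∫ t, (t : ℂ) / (1 + (t : ℂ) * w) ∂(specMeasure (hT n).isHermitian) →
        w = mn n x)
    (hminf : ∀ x ∈ Set.Icc a b,
      0 ≤ (minf x).im ∧
      (x : ℂ) = -(minf x)⁻¹ + (c : ℂ) * ∫ t, (t : ℂ) / (1 + (t : ℂ) * minf x) ∂H ∧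
      ∀ w : ℂ, 0 < w.im →
        (x : ℂ) = -w⁻¹ + (c : ℂ) * ∫ t, (t : ℂ) / (1 + (t : ℂ) * w) ∂H → w = minf x)
    (xs : ℕ → ℝ) (x : ℝ) (hxs : ∀ n, xs n ∈ Set.Icc a b) (hx : x ∈ Set.Icc a b)
    (hlim : Tendsto xs atTop (𝓝 x)) :
    Tendsto (fun n => (mn n (xs n)).im / Real.pi - (minf (xs n)).im / Real.pi)
      atTop (𝓝 0) := by
  haveI hfin : ∀ n, IsFiniteMeasure (specMeasure (hT n).isHermitian) :=
    fun n => specMeasure_finite _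
  set μ : ℕ → Measure ℝ := fun n => specMeasure (hT n).isHermitian with hμdef
  have hμm : ∀ n, μ n Set.univ ≤ 1 := fun n => specMeasure_mass _
  have hHm : H Set.univ ≤ 1 := by simp
  have hpt : ∀ w : ℂ, 0 < w.im → Tendsto (fun n => Gt (μ n) w) atTop (𝓝 (Gt H w)) :=
    fun w hw => Gt_tendsto hweak hw
  obtain ⟨him0, heq0, huniq0⟩ := hminf x hx
  -- sequence facts
  have hmn' := fun n => hmn n (xs n) (hxs n)
  have hminf' := fun n => hminf (xs n) (hxs n)
  have heqmn : ∀ n, ((xs n : ℝ) : ℂ)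
      = -(mn n (xs n))⁻¹ + ((cs n : ℝ) : ℂ) * Gt (μ n) (mn n (xs n)) :=
    fun n => (hmn' n).2.1
  have huniqmn : ∀ n, ∀ v : ℂ, 0 < v.im →
      ((xs n : ℝ) : ℂ) = -v⁻¹ + ((cs n : ℝ) : ℂ) * Gt (μ n) v → v = mn n (xs n) :=
    fun n v hv hveq => (hmn' n).2.2 v hv hveq
  have heqminf : ∀ n, ((xs n : ℝ) : ℂ)
      = -(minf (xs n))⁻¹ + ((c : ℝ) : ℂ) * Gt H (minf (xs n)) :=
    fun n => (hminf' n).2.1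
  have huniqminf : ∀ n, ∀ v : ℂ, 0 < v.im →
      ((xs n : ℝ) : ℂ) = -v⁻¹ + ((c : ℝ) : ℂ) * Gt H v → v = minf (xs n) :=
    fun n v hv hveq => (hminf' n).2.2 v hv hveq
  have hptH : ∀ w : ℂ, 0 < w.im →
      Tendsto (fun _ : ℕ => Gt H w) atTop (𝓝 (Gt H w)) := fun w _ => tendsto_const_nhds
  have hHm' : ∀ _ : ℕ, H Set.univ ≤ 1 := fun _ => hHm
  rcases eq_or_lt_of_le him0 with hzero | hpos
  · -- Im (minf x) = 0
    have hno : ∀ w : ℂ, 0 < w.im → (x : ℂ) = -w⁻¹ + (c : ℂ) * Gt H w → False := by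
      intro w hw hweq
      have := huniq0 w hw hweq
      rw [this] at hw
      rw [← hzero] at hw
      exact lt_irrefl _ hw
    have t1 : Tendsto (fun n => (mn n (xs n)).im) atTop (𝓝 0) :=
      key1 hμm hpt hcs0 hcs ha hxs hlim (fun n => (hmn' n).1) heqmn hno
    have t2 : Tendsto (fun n => (minf (xs n)).im) atTop (𝓝 0) :=
      key1 (μ := fun _ => H) hHm' hptH (fun _ => hc.1) tendsto_const_nhds ha hxs hlim
        (fun n => (hminf' n).1) heqminf hno
    have := (t1.div_const Real.pi).sub (t2.div_const Real.pi)
    simpa using this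
  · -- Im (minf x) > 0
    have t1 : Tendsto (fun n => mn n (xs n)) atTop (𝓝 (minf x)) :=
      key2 hμm hHm hpt hc.1 hcs0 hcs ha hx.1 hlim hpos heq0 huniqmn
    have t2 : Tendsto (fun n => minf (xs n)) atTop (𝓝 (minf x)) :=
      key2 (μ := fun _ => H) hHm' hHm hptH hc.1 (fun _ => hc.1) tendsto_const_nhds ha hx.1
        hlim hpos heq0 huniqminf
    have i1 : Tendsto (fun n => (mn n (xs n)).im) atTop (𝓝 (minf x).im) :=
      (Complex.continuous_im.tendsto _).comp t1
    have i2 : Tendsto (fun n => (minf (xs n)).im) atTop (𝓝 (minf x).im) :=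
      (Complex.continuous_im.tendsto _).comp t2
    have := (i1.div_const Real.pi).sub (i2.div_const Real.pi)
    simpa using this
end
end

section
/- The Marcenko–Pastur densities depend continuously on the ratio parameter uniformly in x: if c_n → c with c ∈ (0,1) and all c_n ∈ (0,1), then sup_{x∈ℝ} |f_{c_n}(x) − f_c(x)| → 0 as n → ∞. -/
open MeasureTheory Matrix Filter Finset Topology ProbabilityTheory
open scoped ENNReal BigOperators

noncomputable section

/-- Continuous extension of the MP density used for the uniform-continuity argument. -/
def Fextp (p : ℝ × ℝ) : ℝ :=
  Real.sqrt (max 0 (((1 + Real.sqrt p.1) ^ 2 - p.2) * (p.2 - (1 - Real.sqrt p.1) ^ 2)))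
    / (2 * Real.pi * p.1 * p.2)

lemma mpDensity_eq_Fextp (c' x : ℝ) : mpDensity c' x = Fextp (c', x) := by
  unfold mpDensity Fextp
  by_cases h : (1 - Real.sqrt c') ^ 2 ≤ x ∧ x ≤ (1 + Real.sqrt c') ^ 2
  · rw [if_pos h]
    congr 2
    exact (max_eq_right (mul_nonneg (sub_nonneg.2 h.2) (sub_nonneg.2 h.1))).symm
  · rw [if_neg h]
    have hs := Real.sqrt_nonneg c'
    have hprod : ((1 + Real.sqrt c') ^ 2 - x) * (x - (1 - Real.sqrt c') ^ 2) ≤ 0 := by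
      rcases not_and_or.mp h with h1 | h2
      · push_neg at h1; nlinarith
      · push_neg at h2; nlinarith
    simp [max_eq_left hprod]

lemma fextp_contAt {d x : ℝ} (hd0 : 0 < d) (hd1 : d < 1) : ContinuousAt Fextp (d, x) := by
  rcases eq_or_ne x 0 with rfl | hx
  · have hs : Real.sqrt d < 1 := by
      rw [show (1 : ℝ) = Real.sqrt 1 by simp]
      exact Real.sqrt_lt_sqrt hd0.le hd1
    have hU : IsOpen {q : ℝ × ℝ | q.2 < (1 - Real.sqrt q.1) ^ 2} :=
      isOpen_lt continuous_snd (by fun_prop)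
    have hmem : ((d, (0 : ℝ)) : ℝ × ℝ) ∈ {q : ℝ × ℝ | q.2 < (1 - Real.sqrt q.1) ^ 2} := by
      simp only [Set.mem_setOf_eq]
      have : 0 < 1 - Real.sqrt d := by linarith
      positivity
    have hev : Fextp =ᶠ[𝓝 ((d, (0 : ℝ)) : ℝ × ℝ)] fun _ => 0 := by
      filter_upwards [hU.mem_nhds hmem] with q hq
      have h1 := Real.sqrt_nonneg q.1
      have hprod : ((1 + Real.sqrt q.1) ^ 2 - q.2) * (q.2 - (1 - Real.sqrt q.1) ^ 2) ≤ 0 := by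
        nlinarith [hq]
      unfold Fextp
      simp [max_eq_left hprod]
    exact continuousAt_const.congr hev.symm
  · apply ContinuousAt.div
    · fun_prop
    · fun_prop
    · exact mul_ne_zero (mul_ne_zero (mul_ne_zero two_ne_zero Real.pi_ne_zero) hd0.ne') hx

lemma mpDensity_zero_of_notin {c' x : ℝ} (h0 : 0 < c') (h1 : c' < 1)
    (hx : x ∉ Set.Icc (0 : ℝ) 4) : mpDensity c' x = 0 := by
  have hs0 := Real.sqrt_nonneg c'
  have hs1 : Real.sqrt c' ≤ 1 := by
    rw [show (1 : ℝ) = Real.sqrt 1 by simp]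
    exact Real.sqrt_le_sqrt h1.le
  rw [mpDensity, if_neg]
  rintro ⟨ha, hb⟩
  rw [Set.mem_Icc] at hx
  push_neg at hx
  rcases lt_or_ge x 0 with h | h
  · nlinarith
  · have := hx h; nlinarith

/-- The Marcenko–Pastur densities depend continuously on the ratio parameter,
uniformly in `x`. -/
theorem mp_density_continuous_in_ratio
    (c : ℝ) (hc : c ∈ Set.Ioo (0 : ℝ) 1)
    (cs : ℕ → ℝ) (hcs : ∀ n, cs n ∈ Set.Ioo (0 : ℝ) 1)
    (hlim : Tendsto cs atTop (𝓝 c)) :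
    Tendsto (fun n => ⨆ x : ℝ, |mpDensity (cs n) x - mpDensity c x|) atTop (𝓝 0) := by
  obtain ⟨hc0, hc1⟩ := hc
  set K : Set ℝ := Set.Icc (c / 2) ((c + 1) / 2) with hKdef
  have hKsub : ∀ d ∈ K, 0 < d ∧ d < 1 := fun d hd => ⟨by linarith [hd.1], by linarith [hd.2]⟩
  have hcK : c ∈ K := ⟨by linarith, by linarith⟩
  have hcomp : IsCompact (K ×ˢ Set.Icc (0 : ℝ) 4) := isCompact_Icc.prod isCompact_Icc
  have hcont : ContinuousOn Fextp (K ×ˢ Set.Icc (0 : ℝ) 4) := fun p hp =>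
    (fextp_contAt (hKsub p.1 hp.1).1 (hKsub p.1 hp.1).2).continuousWithinAt
  have huc := hcomp.uniformContinuousOn_of_continuous hcont
  rw [Metric.uniformContinuousOn_iff] at huc
  rw [Metric.tendsto_atTop]
  intro ε hε
  obtain ⟨δ, hδ, hud⟩ := huc (ε / 2) (by linarith)
  obtain ⟨N, hN⟩ := Metric.tendsto_atTop.mp hlim (min δ (min (c / 2) ((1 - c) / 2)))
    (lt_min hδ (lt_min (by linarith) (by linarith)))
  refine ⟨N, fun n hn => ?_⟩
  have hdist := hN n hn
  rw [Real.dist_eq] at hdist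
  have hδ' : |cs n - c| < δ := lt_of_lt_of_le hdist (min_le_left _ _)
  have hc2 : |cs n - c| < c / 2 :=
    lt_of_lt_of_le hdist (le_trans (min_le_right _ _) (min_le_left _ _))
  have hc3 : |cs n - c| < (1 - c) / 2 :=
    lt_of_lt_of_le hdist (le_trans (min_le_right _ _) (min_le_right _ _))
  rw [abs_lt] at hc2 hc3
  have hmem : cs n ∈ K := ⟨by linarith [hc2.1], by linarith [hc3.2]⟩
  have hbound : ∀ x : ℝ, |mpDensity (cs n) x - mpDensity c x| ≤ ε / 2 := by
    intro x
    by_cases hx : x ∈ Set.Icc (0 : ℝ) 4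
    · have h1 : ((cs n, x) : ℝ × ℝ) ∈ K ×ˢ Set.Icc (0 : ℝ) 4 := ⟨hmem, hx⟩
      have h2 : ((c, x) : ℝ × ℝ) ∈ K ×ˢ Set.Icc (0 : ℝ) 4 := ⟨hcK, hx⟩
      have h3 : dist ((cs n, x) : ℝ × ℝ) ((c, x) : ℝ × ℝ) < δ := by
        rw [Prod.dist_eq]
        simp only [dist_self]
        rw [Real.dist_eq]
        exact max_lt hδ' hδ
      have h4 := hud _ h1 _ h2 h3
      rw [Real.dist_eq] at h4
      rw [mpDensity_eq_Fextp, mpDensity_eq_Fextp]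
      linarith
    · have e1 : mpDensity (cs n) x = 0 :=
        mpDensity_zero_of_notin (hcs n).1 (hcs n).2 hx
      have e2 : mpDensity c x = 0 := mpDensity_zero_of_notin hc0 hc1 hx
      rw [e1, e2]
      simp
      linarith
  have hS0 : 0 ≤ ⨆ x : ℝ, |mpDensity (cs n) x - mpDensity c x| :=
    Real.iSup_nonneg fun x => abs_nonneg _
  have hSle : (⨆ x : ℝ, |mpDensity (cs n) x - mpDensity c x|) ≤ ε / 2 :=
    Real.iSup_le hbound (by linarith)
  rw [Real.dist_eq, sub_zero, abs_of_nonneg hS0]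
  linarith
end
end

section
/- Kernel smoothing of a continuous compactly supported density converges uniformly on the support: let f be a probability density on ℝ that vanishes outside [a,b] and is continuous on ℝ (hence bounded), and let K : ℝ → ℝ satisfy sup_x |K(x)| < ∞, |x K(x)| → 0 as |x| → ∞, ∫ K(x) dx = 1 and ∫ |K(x)| dx < ∞. If h = h(n) > 0 and h → 0, then sup_{x∈[a,b]} | h^{-1} ∫ K((x−t)/h) f(t) dt − f(x) | → 0 as n → ∞. -/
open MeasureTheory Matrix Filter Finset Topology ProbabilityTheory
open scoped ENNReal BigOperators

noncomputable section

/-- Kernel smoothing of a continuous compactly supported density converges uniformly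
on the support. -/
theorem kernel_smoothing_uniform_convergence
    (f : ℝ → ℝ) (a b : ℝ) (hab : a < b)
    (hf0 : ∀ x, x ∉ Set.Icc a b → f x = 0)
    (hfcont : Continuous f)
    (hfnonneg : ∀ x, 0 ≤ f x)
    (hfint : ∫ x, f x = 1)
    (K : ℝ → ℝ) (hKmeas : Measurable K)
    (hKbdd : ∃ B : ℝ, ∀ x, |K x| ≤ B)
    (hKdecay : Tendsto (fun x => x * K x) (cocompact ℝ) (𝓝 0))
    (hKint : ∫ x, K x = 1)
    (hKabs : Integrable K)
    (h : ℕ → ℝ) (hpos : ∀ n, 0 < h n) (hto0 : Tendsto h atTop (𝓝 0)) :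
    Tendsto (fun n => ⨆ x ∈ Set.Icc a b,
      |(∫ t, K ((x - t) / h n) * f t) / h n - f x|) atTop (𝓝 0) := by
  classical
  have hsupp : HasCompactSupport f := HasCompactSupport.intro isCompact_Icc hf0
  have hfu : UniformContinuous f := hsupp.uniformContinuous_of_continuous hfcont
  obtain ⟨C, hCf⟩ : ∃ C, ∀ x, |f x| ≤ C := by
    obtain ⟨C, hC⟩ := hsupp.exists_bound_of_continuous hfcont
    exact ⟨C, fun x => by simpa [Real.norm_eq_abs] using hC x⟩
  have hC0 : 0 ≤ C := le_trans (abs_nonneg _) (hCf 0)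
  set I : ℝ := ∫ u, |K u| with hI
  have hI0 : 0 ≤ I := integral_nonneg fun u => abs_nonneg _
  -- integrability of the basic products
  have hKf_int : ∀ (x c : ℝ), Integrable (fun u => K u * f (x - c * u)) := by
    intro x c
    have hmeas : AEStronglyMeasurable (fun u : ℝ => f (x - c * u)) volume :=
      (hfcont.comp (by continuity : Continuous fun u : ℝ => x - c * u)).aestronglyMeasurable
    have hb : ∃ B : ℝ, ∀ u : ℝ, ‖f (x - c * u)‖ ≤ B :=
      ⟨C, fun u => by simpa [Real.norm_eq_abs] using hCf (x - c * u)⟩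
    have := hKabs.bdd_mul hmeas (Filter.Eventually.of_forall hb.choose_spec)
    exact this.congr (Filter.Eventually.of_forall fun u => mul_comm _ _)
  -- the key change of variables identity
  have key : ∀ n, ∀ x : ℝ, (∫ t, K ((x - t) / h n) * f t) / h n - f x
      = ∫ u, K u * (f (x - h n * u) - f x) := by
    intro n x
    have hn := hpos n
    have h1 : (∫ t, K ((x - t) / h n) * f t) = ∫ s, K (s / h n) * f (x - s) := by
      have := integral_sub_left_eq_self (fun s => K (s / h n) * f (x - s)) volume x
      simpa [sub_sub_cancel] using this
    have hdiv : ∀ s : ℝ, h n * (s / h n) = s := fun s => by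
      field_simp
    have h2 : (∫ s, K (s / h n) * f (x - s)) = |h n| • ∫ u, K u * f (x - h n * u) := by
      have := MeasureTheory.Measure.integral_comp_div
        (fun u => K u * f (x - h n * u)) (h n)
      simpa only [hdiv] using this
    have h3 : (∫ u : ℝ, K u * f x) = f x := by
      rw [integral_mul_const, hKint, one_mul]
    rw [h1, h2, smul_eq_mul, abs_of_pos hn, mul_div_cancel_left₀ _ hn.ne']
    simp only [mul_sub]
    rw [integral_sub (hKf_int x (h n)) (hKabs.mul_const (f x)), h3]
  -- tail estimate: choose M with small tail integral of |K|
  have tail : ∀ ε : ℝ, 0 < ε → ∃ M : ℝ, 0 ≤ M ∧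
      (∫ u in (Metric.closedBall (0:ℝ) M)ᶜ, |K u|) ≤ ε := by
    intro ε hε
    have hmono : Monotone fun m : ℕ => Metric.closedBall (0:ℝ) m := fun i j hij =>
      Metric.closedBall_subset_closedBall (by exact_mod_cast hij)
    have hUnion : (⋃ m : ℕ, Metric.closedBall (0:ℝ) m) = Set.univ :=
      Metric.iUnion_closedBall_nat 0
    have htend : Tendsto (fun m : ℕ => ∫ u in Metric.closedBall (0:ℝ) m, |K u|)
        atTop (𝓝 I) := by
      have := tendsto_setIntegral_of_monotone (f := fun u => |K u|) (μ := volume)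
        (fun m : ℕ => measurableSet_closedBall) hmono
        (by rw [hUnion]; exact hKabs.abs.integrableOn)
      rwa [hUnion, MeasureTheory.setIntegral_univ] at this
    have : ∀ᶠ m : ℕ in atTop, I - ε < ∫ u in Metric.closedBall (0:ℝ) m, |K u| :=
      htend.eventually (eventually_gt_nhds (by linarith))
    obtain ⟨m, hm⟩ := this.exists
    refine ⟨m, Nat.cast_nonneg m, ?_⟩
    have hsplit := MeasureTheory.integral_add_compl
      (measurableSet_closedBall (x := (0:ℝ)) (ε := (m:ℝ))) hKabs.abs
    have : (∫ u in Metric.closedBall (0:ℝ) m, |K u|)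
        + (∫ u in (Metric.closedBall (0:ℝ) m)ᶜ, |K u|) = I := hsplit
    linarith
  -- now the main convergence
  rw [NormedAddCommGroup.tendsto_nhds_zero]
  intro ε hε
  set ε' : ℝ := ε / (4 * (I + 1)) with hε'def
  have hε' : 0 < ε' := by positivity
  obtain ⟨M, hM0, hMtail⟩ := tail (ε / (8 * (C + 1))) (by positivity)
  obtain ⟨δ, hδ0, hδ⟩ := Metric.uniformContinuous_iff.mp hfu ε' hε'
  have hev : ∀ᶠ n in atTop, h n < δ / (M + 1) :=
    hto0.eventually (eventually_lt_nhds (by positivity))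
  filter_upwards [hev] with n hn
  have hnpos := hpos n
  -- pointwise bound for x in [a,b]
  have bound : ∀ x : ℝ, |(∫ t, K ((x - t) / h n) * f t) / h n - f x| ≤ ε / 2 := by
    intro x
    rw [key n x]
    have step1 : |∫ u, K u * (f (x - h n * u) - f x)|
        ≤ ∫ u, |K u| * |f (x - h n * u) - f x| := by
      simpa [Real.norm_eq_abs, abs_mul] using
        norm_integral_le_integral_norm (fun u => K u * (f (x - h n * u) - f x))
    set g : ℝ → ℝ := fun u => ε' * |K u|
      + (2 * C) * Set.indicator (Metric.closedBall (0:ℝ) M)ᶜ (fun u => |K u|) u with hg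
    have hgint : Integrable g := by
      exact (hKabs.abs.const_mul ε').add
        ((hKabs.abs.indicator measurableSet_closedBall.compl).const_mul (2 * C))
    have step2 : (∫ u, |K u| * |f (x - h n * u) - f x|) ≤ ∫ u, g u := by
      refine integral_mono_of_nonneg
        (Filter.Eventually.of_forall fun u => mul_nonneg (abs_nonneg _) (abs_nonneg _))
        hgint (Filter.Eventually.of_forall fun u => ?_)
      by_cases hu : u ∈ Metric.closedBall (0:ℝ) M
      · have hdist : dist (x - h n * u) x < δ := by
          rw [Real.dist_eq]
          have h1 : x - h n * u - x = -(h n * u) := by ring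
          rw [h1, abs_neg, abs_mul, abs_of_pos hnpos]
          have hu' : |u| ≤ M := by
            simpa [Real.dist_eq] using Metric.mem_closedBall.mp hu
          have : h n * |u| ≤ h n * M := by
            exact mul_le_mul_of_nonneg_left hu' hnpos.le
          have h2 : h n * M < δ := by
            have := mul_lt_mul_of_pos_right hn (by linarith : (0:ℝ) < M + 1)
            rw [div_mul_cancel₀ _ (by linarith : M + 1 ≠ 0)] at this
            nlinarith [hnpos.le]
          linarith
        have hf' : |f (x - h n * u) - f x| ≤ ε' := by
          have := hδ hdist
          rw [Real.dist_eq] at this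
          exact this.le
        have hind : 0 ≤ (2 * C) *
            Set.indicator (Metric.closedBall (0:ℝ) M)ᶜ (fun u => |K u|) u := by
          apply mul_nonneg (by linarith)
          exact Set.indicator_nonneg (fun u _ => abs_nonneg _) u
        have : |K u| * |f (x - h n * u) - f x| ≤ |K u| * ε' :=
          mul_le_mul_of_nonneg_left hf' (abs_nonneg _)
        simp only [hg]
        nlinarith
      · have hind : Set.indicator (Metric.closedBall (0:ℝ) M)ᶜ
            (fun u => |K u|) u = |K u| :=
          Set.indicator_of_mem (Set.mem_compl hu) _
        have hf' : |f (x - h n * u) - f x| ≤ 2 * C := by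
          calc |f (x - h n * u) - f x| ≤ |f (x - h n * u)| + |f x| := abs_sub _ _
            _ ≤ C + C := add_le_add (hCf _) (hCf _)
            _ = 2 * C := by ring
        have h1 : |K u| * |f (x - h n * u) - f x| ≤ |K u| * (2 * C) :=
          mul_le_mul_of_nonneg_left hf' (abs_nonneg _)
        have h2 : 0 ≤ ε' * |K u| := mul_nonneg hε'.le (abs_nonneg _)
        simp only [hg, hind]
        nlinarith
    have step3 : (∫ u, g u) = ε' * I
        + (2 * C) * ∫ u in (Metric.closedBall (0:ℝ) M)ᶜ, |K u| := by
      rw [hg, integral_add (hKabs.abs.const_mul ε')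
        ((hKabs.abs.indicator measurableSet_closedBall.compl).const_mul (2 * C)),
        integral_const_mul, integral_const_mul,
        integral_indicator measurableSet_closedBall.compl]
    have htail0 : 0 ≤ ∫ u in (Metric.closedBall (0:ℝ) M)ᶜ, |K u| :=
      integral_nonneg fun u => abs_nonneg _
    have hfin : ε' * I + (2 * C) * (∫ u in (Metric.closedBall (0:ℝ) M)ᶜ, |K u|)
        ≤ ε / 2 := by
      have h1 : ε' * I ≤ ε / 4 := by
        rw [hε'def]
        rw [div_mul_eq_mul_div, div_le_div_iff₀ (by positivity) (by norm_num)]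
        nlinarith
      have h2 : (2 * C) * (∫ u in (Metric.closedBall (0:ℝ) M)ᶜ, |K u|) ≤ ε / 4 := by
        have : (2 * C) * (∫ u in (Metric.closedBall (0:ℝ) M)ᶜ, |K u|)
            ≤ (2 * C) * (ε / (8 * (C + 1))) :=
          mul_le_mul_of_nonneg_left hMtail (by linarith)
        have h3 : (2 * C) * (ε / (8 * (C + 1))) ≤ ε / 4 := by
          rw [mul_div_assoc', div_le_div_iff₀ (by positivity) (by norm_num)]
          nlinarith
        linarith
      linarith
    calc |∫ u, K u * (f (x - h n * u) - f x)|
        ≤ ∫ u, |K u| * |f (x - h n * u) - f x| := step1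
      _ ≤ ∫ u, g u := step2
      _ = _ := step3
      _ ≤ ε / 2 := hfin
  -- conclude: the iSup is between 0 and ε/2
  have hDnn : 0 ≤ ⨆ x ∈ Set.Icc a b, |(∫ t, K ((x - t) / h n) * f t) / h n - f x| :=
    Real.iSup_nonneg fun x => Real.iSup_nonneg fun _ => abs_nonneg _
  have hDle : (⨆ x ∈ Set.Icc a b, |(∫ t, K ((x - t) / h n) * f t) / h n - f x|) ≤ ε / 2 :=
    Real.iSup_le (fun x => Real.iSup_le (fun _ => bound x) (by linarith)) (by linarith)
  rw [Real.norm_eq_abs, abs_of_nonneg hDnn]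
  linarith
end
end
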